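/- arXiv:2012.13531 — 5 statements merged into one kernel-verified Lean document; each statement's English description precedes it below -/
import Mathlib

section
/- Let α > −2 and let N be an integer with N ≤ 2 (N = 1 or N = 2). Then there is no entire radial solution of Δ²u = |x|^α e^u normalized by u(0) = 0, for any value of the initial datum β = v(0). -/
open MeasureTheory Real Set Filter

noncomputable section

/-- An entire radial solution of `Δ²u = |x|^α e^u` in dimension `N`, normalized by
`u(0) = 0`: a pair of `C²` functions `u, v` on `[0,∞)` with `u(0) = 0`,
`u′(0) = v′(0) = 0` (one-sided derivatives at `0`), satisfying for all `r > 0`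
`u″(r) + (N-1)u′(r)/r = v(r)` and `v″(r) + (N-1)v′(r)/r = r^α e^{u(r)}`. -/
def IsEntireRadialSolution (N : ℕ) (α : ℝ) (u v : ℝ → ℝ) : Prop :=
  ContDiffOn ℝ 2 u (Set.Ici 0) ∧ ContDiffOn ℝ 2 v (Set.Ici 0) ∧
  u 0 = 0 ∧ derivWithin u (Set.Ici 0) 0 = 0 ∧ derivWithin v (Set.Ici 0) 0 = 0 ∧
  (∀ r > (0 : ℝ), deriv (deriv u) r + ((N : ℝ) - 1) * deriv u r / r = v r) ∧
  (∀ r > (0 : ℝ), deriv (deriv v) r + ((N : ℝ) - 1) * deriv v r / r = r ^ α * Real.exp (u r))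

/-- The set of initial data `β = v(0)` for which an entire radial solution exists. -/
def entireSet (N : ℕ) (α : ℝ) : Set ℝ :=
  {β : ℝ | ∃ u v : ℝ → ℝ, IsEntireRadialSolution N α u v ∧ v 0 = β}

/-- If `f` has derivative `f' ≥ c` on `[a,b]`, then `f b ≥ f a + c (b-a)`. -/
lemma incr_of_deriv_ge (f f' : ℝ → ℝ) {a b c : ℝ} (hab : a ≤ b)
    (hderiv : ∀ x ∈ Set.Icc a b, HasDerivAt f (f' x) x)
    (hge : ∀ x ∈ Set.Icc a b, c ≤ f' x) :
    f a + c * (b - a) ≤ f b := by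
  set g : ℝ → ℝ := fun x => f x - c * x with hg
  have hgd : ∀ x ∈ Set.Icc a b, HasDerivAt g (f' x - c) x := by
    intro x hx
    exact ((hderiv x hx).sub ((hasDerivAt_id' x).const_mul c)).congr_deriv (by ring)
  have hmono : MonotoneOn g (Set.Icc a b) := by
    apply monotoneOn_of_deriv_nonneg (convex_Icc a b)
    · exact fun x hx => (hgd x hx).continuousAt.continuousWithinAt
    · intro x hx
      rw [interior_Icc] at hx
      exact (hgd x (Set.Ioo_subset_Icc_self hx)).differentiableAt.differentiableWithinAt
    · intro x hx
      rw [interior_Icc] at hx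
      rw [(hgd x (Set.Ioo_subset_Icc_self hx)).deriv]
      have := hge x (Set.Ioo_subset_Icc_self hx)
      linarith
  have := hmono (Set.left_mem_Icc.2 hab) (Set.right_mem_Icc.2 hab) hab
  simp only [hg] at this
  nlinarith

lemma div_bound_aux {x L rc r s : ℝ} (hrc : 0 < rc) (hrcs : rc ≤ s) (hs : 0 < s) (hsr : s ≤ r)
    (hL : 0 ≤ L) (hG : L ≤ rc * x) : L / r ≤ x := by
  have h1 : L / r ≤ L / rc := div_le_div_of_nonneg_left hL hrc (le_trans hrcs hsr)
  have h2 : L / rc ≤ x := (div_le_iff₀ hrc).2 (by linarith [hG])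
  linarith

lemma derivs_of_contDiffOn {w : ℝ → ℝ} (hw : ContDiffOn ℝ 2 w (Set.Ici 0)) :
    (∀ r : ℝ, 0 < r → HasDerivAt w (deriv w r) r) ∧
    (∀ r : ℝ, 0 < r → HasDerivAt (deriv w) (deriv (deriv w) r) r) := by
  have hw' : ContDiffOn ℝ 2 w (Set.Ioi 0) := hw.mono Set.Ioi_subset_Ici_self
  have hdw : ContDiffOn ℝ 1 (deriv w) (Set.Ioi 0) :=
    hw'.deriv_of_isOpen isOpen_Ioi (by norm_num)
  constructor
  · intro r hr
    exact ((hw'.contDiffAt (isOpen_Ioi.mem_nhds hr)).differentiableAt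
      (by norm_num)).hasDerivAt
  · intro r hr
    exact ((hdw.contDiffAt (isOpen_Ioi.mem_nhds hr)).differentiableAt
      (by norm_num)).hasDerivAt

set_option maxHeartbeats 4000000 in
/-- For `N ≤ 2` (and `α > -2`) there is no entire radial solution of
`Δ²u = |x|^α e^u` normalized by `u(0) = 0`, whatever the initial datum `β = v(0)`. -/
theorem no_entire_radial_solution_low_dimension
    (N : ℕ) (hN1 : 1 ≤ N) (hN2 : N ≤ 2) (α : ℝ) (hα : -2 < α) :
    ¬ ∃ u v : ℝ → ℝ, IsEntireRadialSolution N α u v := by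
  rintro ⟨u, v, hu2, hv2, hu0, hu'0, hv'0, hEqU, hEqV⟩
  -- basic constants
  set p : ℝ := (N : ℝ) - 1 with hp
  have hp0 : 0 ≤ p := by
    have : (1 : ℝ) ≤ (N : ℝ) := by exact_mod_cast hN1
    simp [hp]; linarith
  have hp1 : p ≤ 1 := by
    have : (N : ℝ) ≤ 2 := by exact_mod_cast hN2
    simp [hp]; linarith
  set q : ℝ := p + α with hq
  have hq2 : -2 < q := by simp [hq]; linarith
  obtain ⟨hdu, hddu⟩ := derivs_of_contDiffOn hu2
  obtain ⟨hdv, hddv⟩ := derivs_of_contDiffOn hv2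
  set G : ℝ → ℝ := fun r => r ^ p * deriv v r with hGdef
  set H : ℝ → ℝ := fun r => r ^ p * deriv u r with hHdef
  -- derivative of G
  have hG : ∀ r : ℝ, 0 < r → HasDerivAt G (r ^ q * Real.exp (u r)) r := by
    intro r hr
    have h1 : HasDerivAt (fun x : ℝ => x ^ p) (p * r ^ (p - 1)) r :=
      Real.hasDerivAt_rpow_const (Or.inl hr.ne')
    have h3 := h1.mul (hddv r hr)
    refine h3.congr_deriv ?_
    have heq := hEqV r hr
    have hv'' : deriv (deriv v) r = r ^ α * Real.exp (u r) - p * deriv v r / r := by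
      linarith
    have hrc : r ^ (p - 1) = r ^ p / r := by
      rw [Real.rpow_sub hr, Real.rpow_one]
    have hca : r ^ q = r ^ p * r ^ α := by rw [hq]; exact Real.rpow_add hr _ _
    rw [hca, hrc, hv'']
    field_simp
    ring
  -- derivative of H
  have hH : ∀ r : ℝ, 0 < r → HasDerivAt H (r ^ p * v r) r := by
    intro r hr
    have h1 : HasDerivAt (fun x : ℝ => x ^ p) (p * r ^ (p - 1)) r :=
      Real.hasDerivAt_rpow_const (Or.inl hr.ne')
    have h3 := h1.mul (hddu r hr)
    refine h3.congr_deriv ?_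
    have heq := hEqU r hr
    have hu'' : deriv (deriv u) r = v r - p * deriv u r / r := by
      linarith
    have hrc : r ^ (p - 1) = r ^ p / r := by
      rw [Real.rpow_sub hr, Real.rpow_one]
    rw [hrc, hu'']
    field_simp
    ring
  clear_value p q G H
  -- G tends to 0 at 0⁺
  have hGtend : Tendsto G (nhdsWithin 0 (Set.Ioi 0)) (nhds 0) := by
    have hDcont : ContinuousOn (derivWithin v (Set.Ici 0)) (Set.Ici 0) :=
      hv2.continuousOn_derivWithin (uniqueDiffOn_Ici 0) (by norm_num)
    have h0 : Tendsto (derivWithin v (Set.Ici 0)) (nhdsWithin 0 (Set.Ici 0)) (nhds 0) := by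
      have := (hDcont 0 Set.self_mem_Ici)
      rw [ContinuousWithinAt, hv'0] at this
      exact this
    have h1 : Tendsto (deriv v) (nhdsWithin 0 (Set.Ioi 0)) (nhds 0) := by
      refine Tendsto.congr' ?_ (h0.mono_left (nhdsWithin_mono 0 Set.Ioi_subset_Ici_self))
      filter_upwards [eventually_mem_nhdsWithin] with s hs
      exact derivWithin_of_mem_nhds (Ici_mem_nhds hs)
    have h2 : Tendsto (fun r : ℝ => |deriv v r|) (nhdsWithin 0 (Set.Ioi 0)) (nhds 0) := by
      have := h1.abs
      simpa using this
    refine squeeze_zero_norm' ?_ h2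
    filter_upwards [eventually_mem_nhdsWithin,
      mem_nhdsWithin_of_mem_nhds (Iio_mem_nhds (by norm_num : (0:ℝ) < 1))] with r hr1 hr2
    have hrp : 0 ≤ r ^ p := Real.rpow_nonneg (le_of_lt hr1) p
    have hrp1 : r ^ p ≤ 1 := Real.rpow_le_one (le_of_lt hr1) (le_of_lt hr2) hp0
    have : ‖G r‖ = r ^ p * |deriv v r| := by
      simp only [hGdef, Real.norm_eq_abs, abs_mul, abs_of_nonneg hrp]
    rw [this]
    nlinarith [abs_nonneg (deriv v r)]
  -- G is monotone on (0, ∞)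
  have MG : ∀ a b : ℝ, 0 < a → a ≤ b → G a ≤ G b := by
    intro a b ha hab
    have := incr_of_deriv_ge (c := 0) G (fun x => x ^ q * Real.exp (u x)) hab
      (fun x hx => hG x (lt_of_lt_of_le ha hx.1))
      (fun x hx => by
        have hx0 : 0 < x := lt_of_lt_of_le ha hx.1
        positivity)
    linarith
  -- G is nonnegative on (0, ∞)
  have hGpos : ∀ b : ℝ, 0 < b → 0 ≤ G b := by
    intro b hb
    refine le_of_tendsto hGtend ?_
    filter_upwards [eventually_mem_nhdsWithin,
      mem_nhdsWithin_of_mem_nhds (Iio_mem_nhds hb)] with s hs1 hs2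
    exact MG s b hs1 (le_of_lt hs2)
  -- v is monotone on (0, ∞)
  have hdv0 : ∀ x : ℝ, 0 < x → 0 ≤ deriv v x := by
    intro x hx
    by_contra hneg
    push_neg at hneg
    have h1 : 0 < x ^ p := Real.rpow_pos_of_pos hx p
    have h2 : x ^ p * deriv v x < 0 := mul_neg_of_pos_of_neg h1 hneg
    have h3 : G x = x ^ p * deriv v x := by rw [hGdef]
    have := hGpos x hx
    rw [h3] at this
    linarith
  have Mv : ∀ a b : ℝ, 0 < a → a ≤ b → v a ≤ v b := by
    intro a b ha hab
    have := incr_of_deriv_ge (c := 0) v (deriv v) hab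
      (fun x hx => hdv x (lt_of_lt_of_le ha hx.1))
      (fun x hx => hdv0 x (lt_of_lt_of_le ha hx.1))
    linarith
  -- a positive lower bound for G on `[2,∞)`
  obtain ⟨x₀, hx₀, hmin⟩ : ∃ x₀ ∈ Set.Icc (1:ℝ) 2, ∀ y ∈ Set.Icc (1:ℝ) 2, u x₀ ≤ u y := by
    obtain ⟨x₀, hx₀, hmin'⟩ := isCompact_Icc.exists_isMinOn (f := u) ⟨1, by norm_num⟩
      (hu2.continuousOn.mono (fun y (hy : y ∈ Set.Icc (1:ℝ) 2) => le_trans (by norm_num) hy.1))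
    exact ⟨x₀, hx₀, fun y hy => (isMinOn_iff.1 hmin') y hy⟩
  set c₀ : ℝ := Real.exp (u x₀) / 4 with hc₀def
  have hc₀pos : 0 < c₀ := by positivity
  clear_value c₀
  have hfq : ∀ x : ℝ, x ∈ Set.Icc (1:ℝ) 2 → c₀ ≤ x ^ q * Real.exp (u x) := by
    intro x hx
    have hx0 : (0:ℝ) < x := lt_of_lt_of_le one_pos hx.1
    have h1 : x ^ (-2 : ℝ) ≤ x ^ q := Real.rpow_le_rpow_of_exponent_le hx.1 (le_of_lt hq2)
    have h2 : x ^ (-2 : ℝ) = (x ^ (2:ℝ))⁻¹ := Real.rpow_neg (le_of_lt hx0) 2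
    have h3 : x ^ (2:ℝ) = x ^ (2:ℕ) := by
      rw [← Real.rpow_natCast x 2]; norm_num
    have h4 : x ^ (2:ℕ) ≤ 4 := by nlinarith [hx.1, hx.2]
    have h5 : (0:ℝ) < x ^ (2:ℝ) := Real.rpow_pos_of_pos hx0 2
    have h6 : (1:ℝ)/4 ≤ x ^ (-2:ℝ) := by
      have h6' : (4:ℝ)⁻¹ ≤ (x ^ (2:ℕ))⁻¹ := by
        apply inv_anti₀ (by positivity) h4
      rw [h2, h3]
      linarith [h6']
    have h7 : Real.exp (u x₀) ≤ Real.exp (u x) := Real.exp_le_exp.2 (hmin x hx)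
    have h8 : (1:ℝ)/4 ≤ x ^ q := le_trans h6 h1
    calc c₀ = (1/4) * Real.exp (u x₀) := by rw [hc₀def]; ring
      _ ≤ x ^ q * Real.exp (u x) := by
          apply mul_le_mul h8 h7 (by positivity) (by positivity)
  have hGc₀ : ∀ r : ℝ, 2 ≤ r → c₀ ≤ G r := by
    intro r hr
    have h1 : G 1 + c₀ * (2 - 1) ≤ G 2 :=
      incr_of_deriv_ge G (fun x => x ^ q * Real.exp (u x)) (by norm_num)
        (fun x hx => hG x (lt_of_lt_of_le one_pos hx.1)) hfq
    have h2 : (0:ℝ) ≤ G 1 := hGpos 1 one_pos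
    have h3 : G 2 ≤ G r := MG 2 r (by norm_num) hr
    linarith
  -- v tends to infinity; pick `r₁ ≥ 2` with `v r₁ ≥ 1`
  have hvlog : ∀ b : ℝ, 2 ≤ b → v 2 - c₀ * Real.log 2 + c₀ * Real.log b ≤ v b := by
    intro b hb
    have h1 : v 2 - c₀ * Real.log 2 + 0 * (b - 2) ≤ v b - c₀ * Real.log b := by
      refine incr_of_deriv_ge (fun x : ℝ => v x - c₀ * Real.log x)
        (fun x => deriv v x - c₀ * x⁻¹) hb ?_ ?_
      · intro x hx
        have hx0 : (0:ℝ) < x := lt_of_lt_of_le (by norm_num) hx.1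
        exact (hdv x hx0).sub ((Real.hasDerivAt_log hx0.ne').const_mul c₀)
      · intro x hx
        have hx0 : (0:ℝ) < x := lt_of_lt_of_le (by norm_num) hx.1
        have hx1 : (1:ℝ) ≤ x := le_trans (by norm_num) hx.1
        have hG1 : c₀ ≤ G x := hGc₀ x hx.1
        have hxp : x ^ p ≤ x := by
          calc x ^ p ≤ x ^ (1:ℝ) := Real.rpow_le_rpow_of_exponent_le hx1 hp1
            _ = x := Real.rpow_one x
        rw [hGdef] at hG1
        have hbd : c₀ / x ≤ deriv v x :=
          div_bound_aux (Real.rpow_pos_of_pos hx0 p) hxp hx0 le_rfl (le_of_lt hc₀pos) hG1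
        have : c₀ * x⁻¹ = c₀ / x := by ring
        linarith
    linarith
  obtain ⟨r₁, hr₁2, hvr₁⟩ : ∃ r₁ : ℝ, 2 ≤ r₁ ∧ 1 ≤ v r₁ := by
    have ht : Tendsto (fun b : ℝ => v 2 - c₀ * Real.log 2 + c₀ * Real.log b) atTop atTop :=
      tendsto_atTop_add_const_left _ _ (Real.tendsto_log_atTop.const_mul_atTop hc₀pos)
    obtain ⟨b, hb1, hb2⟩ := ((ht.eventually_ge_atTop 1).and (eventually_ge_atTop (2:ℝ))).exists
    exact ⟨b, hb2, le_trans hb1 (hvlog b hb2)⟩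
  have hv1 : ∀ r : ℝ, r₁ ≤ r → 1 ≤ v r :=
    fun r hr => le_trans hvr₁ (Mv r₁ r (by linarith) hr)
  have hr₁1 : (1:ℝ) ≤ r₁ := by linarith
  -- H is monotone on [r₁, ∞) and grows at least linearly
  have hrpow_ge1 : ∀ x : ℝ, 1 ≤ x → (1:ℝ) ≤ x ^ p := by
    intro x hx
    calc (1:ℝ) = x ^ (0:ℝ) := (Real.rpow_zero x).symm
      _ ≤ x ^ p := Real.rpow_le_rpow_of_exponent_le hx hp0
  have hrpow_le : ∀ x : ℝ, 1 ≤ x → x ^ p ≤ x := by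
    intro x hx
    calc x ^ p ≤ x ^ (1:ℝ) := Real.rpow_le_rpow_of_exponent_le hx hp1
      _ = x := Real.rpow_one x
  have hHgrow : ∀ a b : ℝ, r₁ ≤ a → a ≤ b → H a + (b - a) ≤ H b := by
    intro a b ha hab
    have h1 : H a + 1 * (b - a) ≤ H b := by
      refine incr_of_deriv_ge H (fun x => x ^ p * v x) hab ?_ ?_
      · intro x hx
        exact hH x (by linarith [hx.1])
      · intro x hx
        have hx1 : (1:ℝ) ≤ x := le_trans hr₁1 (le_trans ha hx.1)
        have hvx : 1 ≤ v x := hv1 x (le_trans ha hx.1)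
        have h0 := hrpow_ge1 x hx1
        calc (1:ℝ) = 1 * 1 := by norm_num
          _ ≤ x ^ p * v x := mul_le_mul h0 hvx (by norm_num) (by linarith)
    linarith
  have MH : ∀ a b : ℝ, r₁ ≤ a → a ≤ b → H a ≤ H b := by
    intro a b ha hab
    have := hHgrow a b ha hab
    linarith
  set r₂ : ℝ := 2 * (r₁ + |H r₁|) + 2 with hr₂def
  have hr₂r₁ : r₁ ≤ r₂ := by
    have := abs_nonneg (H r₁)
    simp only [hr₂def]; linarith
  have hr₂2 : (2:ℝ) ≤ r₂ := le_trans (le_trans hr₁2 hr₂r₁) le_rfl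
  clear_value r₂
  have hHhalf : ∀ r : ℝ, r₂ ≤ r → r / 2 ≤ H r := by
    intro r hr
    have h1 : H r₁ + (r - r₁) ≤ H r := hHgrow r₁ r le_rfl (le_trans hr₂r₁ hr)
    have h2 := neg_abs_le (H r₁)
    have h3 : 2 * (r₁ + |H r₁|) + 2 ≤ r := by rw [← hr₂def]; exact hr
    linarith
  have hu'half : ∀ r : ℝ, r₂ ≤ r → 1/2 ≤ deriv u r := by
    intro r hr
    have hr1 : (1:ℝ) ≤ r := le_trans (by linarith) hr
    have h1 : r ^ p ≤ r := hrpow_le r hr1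
    have h2 : 0 < r ^ p := Real.rpow_pos_of_pos (by linarith) p
    have h3 : r / 2 ≤ r ^ p * deriv u r := by
      have := hHhalf r hr
      rw [hHdef] at this
      exact this
    nlinarith
  have Mu : ∀ a b : ℝ, r₂ ≤ a → a ≤ b → u a ≤ u b := by
    intro a b ha hab
    have := incr_of_deriv_ge (c := 0) u (deriv u) hab
      (fun x hx => hdu x (by linarith [hx.1]))
      (fun x hx => by linarith [hu'half x (le_trans ha hx.1)])
    linarith
  have hulin : ∀ r : ℝ, r₂ ≤ r → u r₂ + (r - r₂) / 2 ≤ u r := by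
    intro r hr
    have := incr_of_deriv_ge (c := 1/2) u (deriv u) hr
      (fun x hx => hdu x (by linarith [hx.1]))
      (fun x hx => hu'half x hx.1)
    linarith
  -- choose a base point R for the blow-up iteration
  have hlog16 : ∀ᶠ r : ℝ in atTop, 4 * Real.log r ≤ r / 4 := by
    have h := Real.isLittleO_log_id_atTop.bound (by norm_num : (0:ℝ) < 1/16)
    filter_upwards [h, eventually_ge_atTop (0:ℝ)] with r h1 h2
    simp only [Real.norm_eq_abs, id] at h1
    have h3 := le_abs_self (Real.log r)
    rw [abs_of_nonneg h2] at h1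
    linarith
  have hbig : ∀ᶠ r : ℝ in atTop, r / 4 + 40 ≤ u r₂ + (r - r₂) / 2 := by
    filter_upwards [eventually_ge_atTop (4 * (40 + |u r₂| + r₂))] with r hr
    have h1 := neg_abs_le (u r₂)
    have h2 : (0:ℝ) ≤ r₂ := by linarith
    linarith
  obtain ⟨R₀, hR₀⟩ := eventually_atTop.1 (hlog16.and hbig)
  set R : ℝ := max R₀ (max r₂ 9) with hRdef
  have hR₀R : R₀ ≤ R := by rw [hRdef]; exact le_max_left _ _
  have hRr₂ : r₂ ≤ R := by rw [hRdef]; exact le_trans (le_max_left r₂ 9) (le_max_right R₀ _)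
  have hR9 : (9:ℝ) ≤ R := by rw [hRdef]; exact le_trans (le_max_right r₂ 9) (le_max_right R₀ _)
  clear_value R
  have hR1 : (1:ℝ) ≤ R := by linarith
  have hR0 : (0:ℝ) < R := by linarith
  have hprop : ∀ r : ℝ, R ≤ r → 4 * Real.log r ≤ r / 4 ∧ r / 4 + 40 ≤ u r₂ + (r - r₂) / 2 :=
    fun r hr => hR₀ r (le_trans hR₀R hr)
  have hu40 : ∀ r : ℝ, R ≤ r → 40 ≤ u r := by
    intro r hr
    have h1 := hulin r (le_trans hRr₂ hr)
    have h2 := (hprop r hr).2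
    have h3 : (0:ℝ) ≤ r / 4 := by linarith
    linarith
  have hulog : ∀ r : ℝ, R ≤ r → 4 * Real.log r ≤ u r := by
    intro r hr
    have h1 := hulin r (le_trans hRr₂ hr)
    have h2 := (hprop r hr).2
    have h3 := (hprop r hr).1
    linarith
  have hP7 : ∀ r : ℝ, R ≤ r → Real.exp (u r / 2) ≤ r ^ q * Real.exp (u r) := by
    intro r hr
    have hr1 : (1:ℝ) ≤ r := le_trans hR1 hr
    have hr0 : (0:ℝ) < r := by linarith
    have hlr : 0 ≤ Real.log r := Real.log_nonneg hr1
    have h4 := hulog r hr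
    rw [Real.rpow_def_of_pos hr0, ← Real.exp_add]
    apply Real.exp_le_exp.2
    have h5 : -2 * Real.log r ≤ Real.log r * q := by nlinarith
    linarith
  -- the key step inequality
  have step : ∀ r hh : ℝ, R ≤ r → 0 < hh → hh ≤ r →
      u r + hh ^ 4 * Real.exp (u r / 2) / (25 * r ^ 2) ≤ u (r + 4 * hh) := by
    intro r hh hRr hh0 hhr
    have hr₂r : r₂ ≤ r := le_trans hRr₂ hRr
    have hr₁r : r₁ ≤ r := le_trans hr₂r₁ hr₂r
    have hr1 : (1:ℝ) ≤ r := le_trans hR1 hRr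
    have hr0 : (0:ℝ) < r := by linarith
    set E : ℝ := Real.exp (u r / 2) with hEdef
    have hEpos : 0 < E := by rw [hEdef]; exact Real.exp_pos _
    clear_value E
    -- step (a): lower bound for G beyond r + hh
    have ha : G r + E * hh ≤ G (r + hh) := by
      have h1 : G r + E * (r + hh - r) ≤ G (r + hh) := by
        refine incr_of_deriv_ge G (fun x => x ^ q * Real.exp (u x)) (by linarith) ?_ ?_
        · intro x hx
          exact hG x (by linarith [hx.1])
        · intro x hx
          have hux : u r ≤ u x := Mu r x hr₂r hx.1
          have hEx : E ≤ Real.exp (u x / 2) := by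
            rw [hEdef]; exact Real.exp_le_exp.2 (by linarith)
          exact le_trans hEx (hP7 x (le_trans hRr hx.1))
      have h2 : E * (r + hh - r) = E * hh := by ring
      linarith [h1, h2.le, h2.ge]
    have hGlb : ∀ s : ℝ, r + hh ≤ s → E * hh ≤ G s := by
      intro s hs
      have := MG (r + hh) s (by linarith) hs
      have h0 := hGpos r hr0
      linarith
    -- step (b): lower bound for v beyond r + 2h
    have hvd : ∀ s : ℝ, s ∈ Set.Icc (r + hh) (r + 2 * hh) → E * hh / (5 * r) ≤ deriv v s := by
      intro s hs
      have hs1 : (1:ℝ) ≤ s := by linarith [hs.1]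
      have hs0 : (0:ℝ) < s := by linarith
      have hs5 : s ≤ 5 * r := by linarith [hs.2]
      refine div_bound_aux (Real.rpow_pos_of_pos hs0 p) (hrpow_le s hs1) hs0 hs5
        (mul_pos hEpos hh0).le ?_
      have h0 := hGlb s hs.1
      rw [hGdef] at h0
      exact h0
    have hb : E * hh ^ 2 / (5 * r) ≤ v (r + 2 * hh) := by
      have h1 : v (r + hh) + (E * hh / (5 * r)) * (r + 2 * hh - (r + hh)) ≤ v (r + 2 * hh) :=
        incr_of_deriv_ge v (deriv v) (by linarith)
          (fun x hx => hdv x (by linarith [hx.1])) hvd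
      have h2 : (E * hh / (5 * r)) * (r + 2 * hh - (r + hh)) = E * hh ^ 2 / (5 * r) := by ring
      have h3 : 1 ≤ v (r + hh) := hv1 _ (by linarith)
      linarith [h1, h2.le, h2.ge]
    have hvlb : ∀ s : ℝ, r + 2 * hh ≤ s → E * hh ^ 2 / (5 * r) ≤ v s := by
      intro s hs
      have := Mv (r + 2 * hh) s (by linarith) hs
      linarith
    -- step (c): lower bound for H beyond r + 3h
    have hc : E * hh ^ 3 / (5 * r) ≤ H (r + 3 * hh) := by
      have h1 : H (r + 2 * hh) + (E * hh ^ 2 / (5 * r)) * (r + 3 * hh - (r + 2 * hh)) ≤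
          H (r + 3 * hh) := by
        refine incr_of_deriv_ge H (fun x => x ^ p * v x) (by linarith) ?_ ?_
        · intro x hx
          exact hH x (by linarith [hx.1])
        · intro x hx
          have hx1 : (1:ℝ) ≤ x := by linarith [hx.1]
          have h2 : (1:ℝ) ≤ x ^ p := hrpow_ge1 x hx1
          have h3 : E * hh ^ 2 / (5 * r) ≤ v x := hvlb x hx.1
          have h4 : (1:ℝ) ≤ v x := hv1 x (by linarith [hx.1])
          nlinarith
      have h2 : (E * hh ^ 2 / (5 * r)) * (r + 3 * hh - (r + 2 * hh)) = E * hh ^ 3 / (5 * r) := by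
        ring
      have h3 : 0 ≤ H (r + 2 * hh) := le_trans (by linarith) (hHhalf (r + 2 * hh) (by linarith))
      linarith [h1, h2.le, h2.ge]
    have hHlb : ∀ s : ℝ, r + 3 * hh ≤ s → E * hh ^ 3 / (5 * r) ≤ H s := by
      intro s hs
      have := MH (r + 3 * hh) s (by linarith) hs
      linarith
    -- step (d): integrate u' on [r+3h, r+4h]
    have hud : ∀ s : ℝ, s ∈ Set.Icc (r + 3 * hh) (r + 4 * hh) →
        E * hh ^ 3 / (5 * r) / (5 * r) ≤ deriv u s := by
      intro s hs
      have hs1 : (1:ℝ) ≤ s := by linarith [hs.1]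
      have hs0 : (0:ℝ) < s := by linarith
      have hs5 : s ≤ 5 * r := by linarith [hs.2]
      refine div_bound_aux (Real.rpow_pos_of_pos hs0 p) (hrpow_le s hs1) hs0 hs5
        (by positivity) ?_
      have h0 := hHlb s hs.1
      rw [hHdef] at h0
      exact h0
    have hd : u (r + 3 * hh) + (E * hh ^ 3 / (5 * r) / (5 * r)) * (r + 4 * hh - (r + 3 * hh)) ≤
        u (r + 4 * hh) :=
      incr_of_deriv_ge u (deriv u) (by linarith)
        (fun x hx => hdu x (by linarith [hx.1])) hud
    have heq : (E * hh ^ 3 / (5 * r) / (5 * r)) * (r + 4 * hh - (r + 3 * hh)) =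
        hh ^ 4 * E / (25 * r ^ 2) := by
      field_simp
      ring
    have hmono := Mu r (r + 3 * hh) hr₂r (by linarith)
    linarith [hd, heq.le, heq.ge]
  -- ===== the blow-up iteration =====
  set K : ℝ := 3 * Real.sqrt (2 * R) * Real.exp (-(u R) / 8) with hKdef
  have hK0 : 0 ≤ K := by
    rw [hKdef]; positivity
  have he5 : (120:ℝ) ≤ Real.exp 5 := by
    have h1 : (2.7182818283:ℝ) ^ (5:ℕ) ≤ Real.exp 1 ^ (5:ℕ) :=
      pow_le_pow_left₀ (by norm_num) (le_of_lt Real.exp_one_gt_d9) 5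
    have h2 : Real.exp 1 ^ (5:ℕ) = Real.exp ((5:ℕ) : ℝ) := Real.exp_one_pow 5
    have h3 : (120:ℝ) ≤ (2.7182818283:ℝ) ^ (5:ℕ) := by norm_num
    have h4 : ((5:ℕ):ℝ) = (5:ℝ) := by norm_num
    rw [h4] at h2
    linarith
  have hsqR1 : (1:ℝ) ≤ Real.sqrt R := by
    rw [show (1:ℝ) = Real.sqrt 1 by simp]
    exact Real.sqrt_le_sqrt hR1
  have hsq2R : Real.sqrt (2 * R) ≤ 2 * Real.sqrt R := by
    rw [Real.sqrt_mul (by norm_num) R]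
    have h1 : Real.sqrt 2 ≤ 2 := by
      have ha : Real.sqrt 4 = 2 := by
        rw [show (4:ℝ) = 2 ^ 2 by norm_num]
        exact Real.sqrt_sq (by norm_num)
      have hb : Real.sqrt 2 ≤ Real.sqrt 4 := Real.sqrt_le_sqrt (by norm_num)
      linarith
    have h2 := mul_le_mul_of_nonneg_right h1 (Real.sqrt_nonneg R)
    linarith
  have hexpuR : Real.exp (-(u R) / 8) ≤ 1 / 120 := by
    have h1 : Real.exp (-(u R) / 8) ≤ Real.exp (-5) := by
      apply Real.exp_le_exp.2
      have := hu40 R le_rfl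
      linarith
    have h2 : Real.exp (-5 : ℝ) = (Real.exp 5)⁻¹ := by
      rw [← Real.exp_neg]
    have h3 : (Real.exp 5)⁻¹ ≤ (120:ℝ)⁻¹ := inv_anti₀ (by norm_num) he5
    rw [h2] at h1
    have h4 : ((120:ℝ))⁻¹ = 1/120 := by norm_num
    linarith
  have h20K : 20 * K ≤ R := by
    have hsR : Real.sqrt R ≤ R := by
      have h1 : Real.sqrt R ≤ Real.sqrt (R ^ 2) := Real.sqrt_le_sqrt (by nlinarith)
      rwa [Real.sqrt_sq hR0.le] at h1
    have hK1 : K ≤ 6 * Real.sqrt R * (1 / 120) := by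
      rw [hKdef]
      calc 3 * Real.sqrt (2 * R) * Real.exp (-(u R) / 8)
          ≤ 3 * (2 * Real.sqrt R) * Real.exp (-(u R) / 8) :=
            mul_le_mul_of_nonneg_right (by linarith) (Real.exp_pos _).le
        _ = 6 * Real.sqrt R * Real.exp (-(u R) / 8) := by ring
        _ ≤ 6 * Real.sqrt R * (1 / 120) :=
            mul_le_mul_of_nonneg_left hexpuR (by positivity)
    linarith
  clear_value K
  -- the iterated sequence
  set g : ℝ → ℝ := fun x => x + 4 * (3 * Real.sqrt x * Real.exp (-(u x) / 8)) with hgdef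
  set ρ : ℕ → ℝ := fun n => g^[n] R with hρdef
  have hρ0 : ρ 0 = R := rfl
  have hgval : ∀ x : ℝ, g x = x + 4 * (3 * Real.sqrt x * Real.exp (-(u x) / 8)) :=
    fun x => rfl
  have hρs : ∀ n : ℕ, ρ (n + 1) = g (ρ n) := fun n => Function.iterate_succ_apply' g n R
  clear_value g ρ
  have e14 : Real.exp (-(1:ℝ) / 4) ≤ 4 / 5 := by
    have h1 : (5:ℝ) / 4 ≤ Real.exp (1 / 4) := by
      have := Real.add_one_le_exp (1 / 4 : ℝ)
      linarith
    have h2 : Real.exp (-(1:ℝ) / 4) = (Real.exp (1 / 4 : ℝ))⁻¹ := by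
      rw [← Real.exp_neg]
      norm_num
    rw [h2]
    calc (Real.exp (1 / 4 : ℝ))⁻¹ ≤ ((5:ℝ) / 4)⁻¹ := inv_anti₀ (by norm_num) h1
      _ ≤ 4 / 5 := by norm_num
  have key : ∀ n : ℕ, R ≤ ρ n ∧ u R + 2 * n ≤ u (ρ n) ∧
      ρ n + 20 * K * Real.exp (-(n:ℝ) / 4) ≤ R + 20 * K := by
    intro n
    induction n with
    | zero =>
      refine ⟨le_of_eq hρ0.symm, by rw [hρ0]; norm_num, ?_⟩
      rw [hρ0]
      norm_num
    | succ n ih =>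
      obtain ⟨ih1, ih2, ih3⟩ := ih
      have hρs' : ρ (n + 1) = ρ n + 4 * (3 * Real.sqrt (ρ n) * Real.exp (-(u (ρ n)) / 8)) := by
        rw [hρs n, hgval]
      obtain ⟨r, hr⟩ : ∃ r, ρ n = r := ⟨_, rfl⟩
      rw [hr] at ih1 ih2 ih3 hρs'
      obtain ⟨hh, hhdef⟩ : ∃ x, 3 * Real.sqrt r * Real.exp (-(u r) / 8) = x := ⟨_, rfl⟩
      rw [hhdef] at hρs'
      have hexpn : (0:ℝ) < Real.exp (-(n:ℝ) / 4) := Real.exp_pos _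
      have hexpn1 : Real.exp (-(n:ℝ) / 4) ≤ 1 := by
        apply Real.exp_le_one_iff.2
        have : (0:ℝ) ≤ (n:ℝ) := Nat.cast_nonneg n
        linarith
    -- ρ n stays below 2R
      have hKe : 0 ≤ 20 * K * Real.exp (-(n:ℝ) / 4) := by positivity
      have hKe1 : 20 * K * Real.exp (-(n:ℝ) / 4) ≤ 20 * K := by
        have h1 := mul_le_mul_of_nonneg_left hexpn1 (show (0:ℝ) ≤ 20 * K by positivity)
        linarith
      have hr2R : r ≤ 2 * R := by linarith
      have hRr : R ≤ r := ih1
      have hu40r : 40 ≤ u r := hu40 r hRr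
      have hrpos : 0 < r := lt_of_lt_of_le hR0 hRr
      have hsq3 : 3 ≤ Real.sqrt r := by
        have h9 : (9:ℝ) ≤ r := le_trans hR9 hRr
        have h1 : Real.sqrt 9 ≤ Real.sqrt r := Real.sqrt_le_sqrt h9
        rw [show (9:ℝ) = 3 ^ 2 by norm_num, Real.sqrt_sq (by norm_num : (0:ℝ) ≤ 3)] at h1
        exact h1
      have hsqr_mul : Real.sqrt r * Real.sqrt r = r := Real.mul_self_sqrt hrpos.le
      have hexpur : Real.exp (-(u r) / 8) ≤ 1 := Real.exp_le_one_iff.2 (by linarith)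
      have hsqpos : 0 < Real.sqrt r := Real.sqrt_pos.2 hrpos
      have hhpos : 0 < hh := by
        rw [← hhdef]; positivity
      have hhler : hh ≤ r := by
        rw [← hhdef]
        calc 3 * Real.sqrt r * Real.exp (-(u r) / 8) ≤ 3 * Real.sqrt r * 1 :=
              mul_le_mul_of_nonneg_left hexpur (by positivity)
          _ = 3 * Real.sqrt r := by ring
          _ ≤ Real.sqrt r * Real.sqrt r :=
              mul_le_mul_of_nonneg_right hsq3 (Real.sqrt_nonneg r)
          _ = r := hsqr_mul
      have hstep := step r hh hRr hhpos hhler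
      have hh4 : hh ^ 4 * Real.exp (u r / 2) / (25 * r ^ 2) = 81 / 25 := by
        have e4 : Real.exp (-(u r) / 8) ^ (4:ℕ) = Real.exp (-(u r) / 2) := by
          rw [← Real.exp_nat_mul]
          congr 1
          push_cast
          ring
        have s4 : Real.sqrt r ^ (4:ℕ) = r ^ 2 := by
          rw [show (4:ℕ) = 2 * 2 from rfl, pow_mul, Real.sq_sqrt hrpos.le]
        have ee : Real.exp (-(u r) / 2) * Real.exp (u r / 2) = 1 := by
          rw [← Real.exp_add, show -(u r) / 2 + u r / 2 = 0 by ring, Real.exp_zero]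
        have hr2 : (0:ℝ) < r ^ 2 := by positivity
        calc hh ^ 4 * Real.exp (u r / 2) / (25 * r ^ 2)
            = 81 * (Real.sqrt r ^ (4:ℕ)) * (Real.exp (-(u r) / 8) ^ (4:ℕ)) *
                Real.exp (u r / 2) / (25 * r ^ 2) := by rw [← hhdef]; ring
          _ = 81 * r ^ 2 * (Real.exp (-(u r) / 2) * Real.exp (u r / 2)) / (25 * r ^ 2) := by
              rw [e4, s4]; ring
          _ = 81 * r ^ 2 * 1 / (25 * r ^ 2) := by rw [ee]
          _ = 81 / 25 := by field_simp
      have hincr : u r + 2 ≤ u (ρ (n + 1)) := by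
        rw [hρs']
        rw [hh4] at hstep
        linarith
      refine ⟨?_, ?_, ?_⟩
      · rw [hρs']
        linarith
      · have : (((n:ℕ) + 1 : ℕ) : ℝ) = (n:ℝ) + 1 := by push_cast; ring
        rw [this]
        linarith
      · -- geometric control of the step sizes
        have hhK : hh ≤ K * Real.exp (-(n:ℝ) / 4) := by
          rw [← hhdef, hKdef]
          have h1 : Real.sqrt r ≤ Real.sqrt (2 * R) := Real.sqrt_le_sqrt hr2R
          have h2 : Real.exp (-(u r) / 8) ≤ Real.exp (-(u R) / 8) * Real.exp (-(n:ℝ) / 4) := by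
            rw [← Real.exp_add]
            apply Real.exp_le_exp.2
            linarith
          calc 3 * Real.sqrt r * Real.exp (-(u r) / 8)
              ≤ 3 * Real.sqrt (2 * R) * Real.exp (-(u r) / 8) :=
                mul_le_mul_of_nonneg_right (by linarith) (Real.exp_pos _).le
            _ ≤ 3 * Real.sqrt (2 * R) * (Real.exp (-(u R) / 8) * Real.exp (-(n:ℝ) / 4)) :=
                mul_le_mul_of_nonneg_left h2 (by positivity)
            _ = 3 * Real.sqrt (2 * R) * Real.exp (-(u R) / 8) * Real.exp (-(n:ℝ) / 4) := by
                ring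
        have hcast : (((n:ℕ) + 1 : ℕ) : ℝ) = (n:ℝ) + 1 := by push_cast; ring
        have hen1 : Real.exp (-((n:ℝ) + 1) / 4) =
            Real.exp (-(n:ℝ) / 4) * Real.exp (-(1:ℝ) / 4) := by
          rw [← Real.exp_add]
          ring_nf
        have hsplit : 20 * K * (Real.exp (-(n:ℝ) / 4) * Real.exp (-(1:ℝ) / 4)) ≤
            16 * (K * Real.exp (-(n:ℝ) / 4)) := by
          have h0 : (0:ℝ) ≤ 20 * (K * Real.exp (-(n:ℝ) / 4)) := by positivity
          have h1 := mul_le_mul_of_nonneg_left e14 h0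
          linarith
        rw [hρs', hcast, hen1]
        linarith [hhK, hsplit, ih3]
  -- finish: u is bounded on the compact interval [R, 2R], contradiction
  obtain ⟨xM, hxM, hmax⟩ : ∃ xM ∈ Set.Icc R (2 * R), ∀ y ∈ Set.Icc R (2 * R), u y ≤ u xM := by
    obtain ⟨xM, hxM, h⟩ := isCompact_Icc.exists_isMaxOn (f := u)
      ⟨R, by constructor <;> linarith⟩
      (hu2.continuousOn.mono (fun y (hy : y ∈ Set.Icc R (2 * R)) => le_trans hR0.le hy.1))
    exact ⟨xM, hxM, fun y hy => (isMaxOn_iff.1 h) y hy⟩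
  obtain ⟨n, hn⟩ := exists_nat_gt ((u xM - u R) / 2)
  obtain ⟨k1, k2, k3⟩ := key n
  have hρ2R : ρ n ≤ 2 * R := by
    have hKe : 0 ≤ 20 * K * Real.exp (-(n:ℝ) / 4) := by positivity
    linarith
  have hfin := hmax (ρ n) ⟨k1, hρ2R⟩
  linarith
end
end

section
/- Let f : ℝ × ℝ → ℝ be continuous and suppose there exist p > 1 and s₀ > 0 such that f(t, s) ≥ s^p for all t ∈ ℝ and all s ≥ s₀. Let m ≥ 1 be an integer, a₁, …, a_m real numbers, t₀ ∈ ℝ, and let u : [t₀, ∞) → ℝ be a C^m function satisfying Σ_{k=1}^{m} a_k u^{(k)}(t) = f(t, u(t)) for all t ≥ t₀. Then u(t) does not tend to +∞ as t → ∞. -/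
open Set Filter

noncomputable section



/-- The basic bump polynomial `x(1-x)`. -/
private noncomputable def mpZ : Polynomial ℝ := Polynomial.X * (1 - Polynomial.X)

/-- The polynomial cofactors appearing in derivatives of `mpZ ^ q`. -/
private noncomputable def mpPsi (q : ℕ) : ℕ → Polynomial ℝ
  | 0 => 1
  | k+1 => Polynomial.C ((q - k : ℕ) : ℝ) * mpZ.derivative * mpPsi q k
      + mpZ * (mpPsi q k).derivative

private lemma mpZ_eval (y : ℝ) : mpZ.eval y = y * (1 - y) := by simp [mpZ]

private lemma iter_deriv_mpZ_pow (q : ℕ) : ∀ k, k ≤ q →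
    Polynomial.derivative^[k] (mpZ ^ q) = mpZ ^ (q - k) * mpPsi q k := by
  intro k
  induction k with
  | zero => intro _; simp [mpPsi]
  | succ k IH =>
    intro hk
    rw [Function.iterate_succ_apply', IH (by omega)]
    have e : q - k = (q - (k+1)) + 1 := by omega
    rw [Polynomial.derivative_mul, Polynomial.derivative_pow]
    simp only [mpPsi]
    rw [e]
    simp only [Nat.add_sub_cancel]
    push_cast
    ring

/-- Young's inequality with a small parameter. -/
private lemma young_eps {p p' : ℝ} (hpq : p.HolderConjugate p') {a b ε : ℝ}
    (ha : 0 ≤ a) (hb : 0 ≤ b) (hε : 0 < ε) :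
    a * b ≤ ε * a ^ p + ε ^ (1 - p') * b ^ p' := by
  set θ : ℝ := ε ^ (1/p) with hθdef
  have hθ : 0 < θ := Real.rpow_pos_of_pos hε _
  have hy := Real.young_inequality_of_nonneg (mul_nonneg hθ.le ha)
    (mul_nonneg (inv_nonneg.2 hθ.le) hb) hpq
  have hp0 : p ≠ 0 := hpq.ne_zero
  have hab : a * b = (θ * a) * (θ⁻¹ * b) := by
    field_simp
  have h1 : (θ * a) ^ p = ε * a ^ p := by
    rw [Real.mul_rpow hθ.le ha, hθdef, ← Real.rpow_mul hε.le, one_div,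
      inv_mul_cancel₀ hp0, Real.rpow_one]
  have h2 : (θ⁻¹ * b) ^ p' = ε ^ (1 - p') * b ^ p' := by
    rw [Real.mul_rpow (inv_nonneg.2 hθ.le) hb, hθdef, ← Real.rpow_neg_one (ε ^ (1/p)),
      ← Real.rpow_mul hε.le, ← Real.rpow_mul hε.le]
    congr 2
    field_simp
    linarith [hpq.mul_eq_add]
  have hple : (θ * a) ^ p / p ≤ (θ * a) ^ p :=
    div_le_self (Real.rpow_nonneg (mul_nonneg hθ.le ha) _) hpq.lt.le
  have hp'le : (θ⁻¹ * b) ^ p' / p' ≤ (θ⁻¹ * b) ^ p' :=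
    div_le_self (Real.rpow_nonneg (mul_nonneg (inv_nonneg.2 hθ.le) hb) _) hpq.symm.lt.le
  calc a * b = (θ * a) * (θ⁻¹ * b) := hab
    _ ≤ (θ * a) ^ p / p + (θ⁻¹ * b) ^ p' / p' := hy
    _ ≤ (θ * a) ^ p + (θ⁻¹ * b) ^ p' := add_le_add hple hp'le
    _ = ε * a ^ p + ε ^ (1 - p') * b ^ p' := by rw [h1, h2]

/-- Iterated integration by parts with vanishing boundary terms. -/
private lemma ibp_iter {A B : ℝ} : ∀ (k : ℕ) (V W : ℕ → ℝ → ℝ),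
    (∀ j < k, ∀ x ∈ Set.uIcc A B, HasDerivAt (V j) (V (j+1) x) x) →
    (∀ j ≤ k, ContinuousOn (V j) (Set.uIcc A B)) →
    (∀ j < k, ∀ x ∈ Set.uIcc A B, HasDerivAt (W j) (W (j+1) x) x) →
    (∀ j ≤ k, ContinuousOn (W j) (Set.uIcc A B)) →
    (∀ j < k, W j A = 0 ∧ W j B = 0) →
    ∫ x in A..B, V k x * W 0 x = (-1 : ℝ) ^ k * ∫ x in A..B, V 0 x * W k x := by
  intro k
  induction k with
  | zero => intro V W _ _ _ _ _; simp
  | succ k IH =>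
    intro V W hV hVc hW hWc hW0
    have h1 := intervalIntegral.integral_mul_deriv_eq_deriv_mul
      (u := W 0) (u' := W 1) (v := V k) (v' := V (k+1))
      (fun x hx => hW 0 (by omega) x hx) (fun x hx => hV k (by omega) x hx)
      ((hWc 1 (by omega)).intervalIntegrable) ((hVc (k+1) le_rfl).intervalIntegrable)
    have h2 := IH V (fun j => W (j+1))
      (fun j hj x hx => hV j (by omega) x hx) (fun j hj => hVc j (by omega))
      (fun j hj x hx => hW (j+1) (by omega) x hx) (fun j hj => hWc (j+1) (by omega))
      (fun j hj => hW0 (j+1) (by omega))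
    have e1 : ∫ x in A..B, V (k+1) x * W 0 x = ∫ x in A..B, W 0 x * V (k+1) x :=
      intervalIntegral.integral_congr (fun x _ => mul_comm _ _)
    have e2 : ∫ x in A..B, W 1 x * V k x = ∫ x in A..B, V k x * W 1 x :=
      intervalIntegral.integral_congr (fun x _ => mul_comm _ _)
    rw [e1, h1, (hW0 0 (by omega)).1, (hW0 0 (by omega)).2, e2, h2]
    ring

private lemma pointwise_young
    {p p' : ℝ} (hpq : p.HolderConjugate p') {q k : ℕ} (hk1 : 1 ≤ k) (hkq : (k : ℝ) * p' ≤ q)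
    {D ε U z c : ℝ} (hD0 : 0 ≤ D) (hε : 0 < ε) (hU : 0 ≤ U)
    (hz0 : 0 ≤ z) (hz1 : z ≤ 1) (hc : 0 ≤ c) :
    U * (c * (z ^ (q - k) * D)) ≤ ε * (U ^ p * z ^ q) + ε ^ (1 - p') * (c * D) ^ p' := by
  have hp'pos : 0 < p' := hpq.symm.pos
  have hppos : 0 < p := hpq.pos
  have hkq' : k ≤ q := by
    have h1 : (k : ℝ) ≤ (k : ℝ) * p' := le_mul_of_one_le_right (Nat.cast_nonneg k)
      hpq.symm.lt.le
    exact_mod_cast h1.trans hkq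
  have hqpos : 0 < (q : ℝ) := by
    have : (1 : ℝ) ≤ k := by exact_mod_cast hk1
    nlinarith
  have hklt : k < q := by
    have hkpos : (0 : ℝ) < (k : ℝ) := by exact_mod_cast hk1
    have h1 : (k : ℝ) < (k : ℝ) * p' := lt_mul_of_one_lt_right hkpos hpq.symm.lt
    exact_mod_cast h1.trans_le hkq
  have hsum : (q : ℝ) / p + (q : ℝ) / p' = q := by
    field_simp
    rw [hpq.mul_eq_add]
    ring
  have hexp : (q : ℝ) / p ≤ ((q - k : ℕ) : ℝ) := by
    have hk' : (k : ℝ) ≤ (q : ℝ) / p' := (le_div_iff₀ hp'pos).2 hkq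
    have : ((q - k : ℕ) : ℝ) = (q : ℝ) - k := by
      push_cast [Nat.cast_sub hkq']
      ring
    rw [this]
    linarith
  -- step 1 : z ^ (q - k) ≤ z ^ (q/p)  (rpow)
  have step1 : z ^ (q - k : ℕ) ≤ z ^ ((q : ℝ) / p) := by
    rcases eq_or_lt_of_le hz0 with hz | hz
    · rw [← hz]
      rw [zero_pow (by omega : q - k ≠ 0), Real.zero_rpow (by positivity)]
    · rw [← Real.rpow_natCast z (q - k)]
      exact Real.rpow_le_rpow_of_exponent_ge hz hz1 hexp
  have step2 : U * (c * (z ^ (q - k) * D)) ≤ (U * z ^ ((q : ℝ) / p)) * (c * D) := by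
    have h1 : U * z ^ (q - k : ℕ) ≤ U * z ^ ((q : ℝ) / p) :=
      mul_le_mul_of_nonneg_left step1 hU
    calc U * (c * (z ^ (q - k) * D)) = (U * z ^ (q - k : ℕ)) * (c * D) := by ring
      _ ≤ (U * z ^ ((q : ℝ) / p)) * (c * D) :=
          mul_le_mul_of_nonneg_right h1 (mul_nonneg hc hD0)
  have step3 := young_eps hpq (a := U * z ^ ((q : ℝ) / p)) (b := c * D)
    (mul_nonneg hU (Real.rpow_nonneg hz0 _)) (mul_nonneg hc hD0) hε
  have step4 : (U * z ^ ((q : ℝ) / p)) ^ p = U ^ p * z ^ q := by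
    rw [Real.mul_rpow hU (Real.rpow_nonneg hz0 _), ← Real.rpow_natCast z q,
      ← Real.rpow_mul hz0, div_mul_cancel₀ _ (ne_of_gt hppos)]
  calc U * (c * (z ^ (q - k) * D)) ≤ (U * z ^ ((q : ℝ) / p)) * (c * D) := step2
    _ ≤ ε * (U * z ^ ((q : ℝ) / p)) ^ p + ε ^ (1 - p') * (c * D) ^ p' := step3
    _ = ε * (U ^ p * z ^ q) + ε ^ (1 - p') * (c * D) ^ p' := by rw [step4]

set_option maxHeartbeats 1000000 in
/-- (Mitidieri–Pohozaev type lemma.)  Let `f : ℝ × ℝ → ℝ` be continuous with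
`f(t,s) ≥ s^p` for some `p > 1` and all large `s`.  If `u` is a `C^m` function on
`[t₀, ∞)` satisfying the ODE `Σ_{k=1}^m a_k u^{(k)}(t) = f(t, u(t))`, then `u(t)`
cannot tend to `+∞` as `t → ∞`. -/
theorem no_blowup_to_infinity
    (f : ℝ → ℝ → ℝ) (hf : Continuous fun p : ℝ × ℝ => f p.1 p.2)
    (p : ℝ) (hp : 1 < p) (s₀ : ℝ) (hs₀ : 0 < s₀)
    (hgrowth : ∀ t : ℝ, ∀ s : ℝ, s₀ ≤ s → s ^ p ≤ f t s)
    (m : ℕ) (hm : 1 ≤ m) (a : ℕ → ℝ) (t₀ : ℝ)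
    (u : ℝ → ℝ) (hu : ContDiffOn ℝ m u (Set.Ici t₀))
    (heq : ∀ t : ℝ, t₀ ≤ t →
      ∑ k ∈ Finset.Icc 1 m, a k * iteratedDerivWithin k u (Set.Ici t₀) t = f t (u t)) :
    ¬ Filter.Tendsto u Filter.atTop Filter.atTop := by
  intro htend
  -- conjugate exponent
  set p' : ℝ := p / (p - 1) with hp'def
  have hpq : p.HolderConjugate p' := Real.HolderConjugate.conjExponent hp
  have hp'1 : 1 < p' := hpq.symm.lt
  have hp'pos : 0 < p' := hpq.symm.pos
  -- the power of the cutoff polynomial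
  set q : ℕ := m * (⌈p'⌉₊ + 1) with hqdef
  have hmq : m ≤ q := Nat.le_mul_of_pos_right m (by omega)
  have hkq : ∀ k ∈ Finset.Icc 1 m, (k : ℝ) * p' ≤ (q : ℝ) := by
    intro k hk
    obtain ⟨hk1, hk2⟩ := Finset.mem_Icc.mp hk
    have h1 : (k : ℝ) * p' ≤ (m : ℝ) * p' :=
      mul_le_mul_of_nonneg_right (by exact_mod_cast hk2) hp'pos.le
    have h2 : (m : ℝ) * p' ≤ (m : ℝ) * (⌈p'⌉₊ : ℝ) :=
      mul_le_mul_of_nonneg_left (Nat.le_ceil p') (Nat.cast_nonneg m)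
    have h3 : (m : ℝ) * (⌈p'⌉₊ : ℝ) ≤ (q : ℝ) := by
      rw [hqdef]
      push_cast
      nlinarith [Nat.cast_nonneg (α := ℝ) m]
    linarith
  -- bounds for the cofactor polynomials on [0,1]
  have hDex : ∀ k : ℕ, ∃ Dk : ℝ, 0 ≤ Dk ∧
      ∀ y ∈ Set.Icc (0:ℝ) 1, |(mpPsi q k).eval y| ≤ Dk := by
    intro k
    obtain ⟨C, hC⟩ := (isCompact_Icc : IsCompact (Set.Icc (0:ℝ) 1)).exists_bound_of_continuousOn
      ((mpPsi q k).continuousOn)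
    refine ⟨max C 0, le_max_right _ _, fun y hy => ?_⟩
    have h := hC y hy
    rw [Real.norm_eq_abs] at h
    exact h.trans (le_max_left _ _)
  choose D hD0 hDb using hDex
  -- threshold beyond which u ≥ s₀
  obtain ⟨T, hT⟩ : ∃ T : ℝ, ∀ t ≥ T, s₀ ≤ u t := by
    have := htend.eventually_ge_atTop s₀
    rw [Filter.eventually_atTop] at this
    exact this
  set A : ℝ := max T (t₀ + 1) with hAdef
  have hA : t₀ < A := lt_of_lt_of_le (by linarith) (le_max_right _ _)
  have hTA : T ≤ A := le_max_left _ _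
  -- constants
  set S : ℝ := ∑ k ∈ Finset.Icc 1 m, |a k| with hSdef
  have hS0 : 0 ≤ S := Finset.sum_nonneg fun _ _ => abs_nonneg _
  set ε : ℝ := 1 / (2 * (S + 1)) with hεdef
  have hε : 0 < ε := by positivity
  set C₁ : ℝ := ε ^ (1 - p') * ∑ k ∈ Finset.Icc 1 m, |a k| * (D k) ^ p' with hC₁def
  have hC₁0 : 0 ≤ C₁ := mul_nonneg (Real.rpow_nonneg hε.le _)
    (Finset.sum_nonneg fun k _ => mul_nonneg (abs_nonneg _) (Real.rpow_nonneg (hD0 k) _))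
  -- the key estimate, for every R ≥ 1
  have key : ∀ R : ℝ, 1 ≤ R →
      s₀ ^ p * (1/8 : ℝ) ^ q * (R / 4) ≤ 2 * C₁ * (R * R ^ (-p')) := by
    intro R hR1
    have hR0 : 0 < R := lt_of_lt_of_le one_pos hR1
    set B : ℝ := A + R with hBdef
    have hAB : A ≤ B := by rw [hBdef]; linarith
    have huIcc : Set.uIcc A B = Set.Icc A B := Set.uIcc_of_le hAB
    -- test function family
    set Φ : ℕ → ℝ → ℝ :=
      fun j x => R⁻¹ ^ j * (Polynomial.derivative^[j] (mpZ ^ q)).eval ((x - A) / R) with hΦdef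
    set V : ℕ → ℝ → ℝ := fun j => iteratedDerivWithin j u (Set.Ici t₀) with hVdef
    -- membership facts
    have hsub : Set.Icc A B ⊆ Set.Ici t₀ := fun x hx => le_trans hA.le hx.1
    have hts : ∀ x ∈ Set.Icc A B, t₀ ≤ x := fun x hx => hsub hx
    have hus : ∀ x ∈ Set.Icc A B, s₀ ≤ u x := fun x hx => hT x (le_trans hTA hx.1)
    have hu0 : ∀ x ∈ Set.Icc A B, 0 ≤ u x := fun x hx => le_trans hs₀.le (hus x hx)
    have hy01 : ∀ x ∈ Set.Icc A B, (x - A) / R ∈ Set.Icc (0:ℝ) 1 := by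
      intro x hx
      constructor
      · apply div_nonneg (by linarith [hx.1]) hR0.le
      · rw [div_le_one hR0]
        have := hx.2
        rw [hBdef] at this
        linarith
    -- derivative and continuity facts for Φ
    have hΦd : ∀ j, ∀ x : ℝ, HasDerivAt (Φ j) (Φ (j+1) x) x := by
      intro j x
      have hinner : HasDerivAt (fun x : ℝ => (x - A) / R) (1 / R) x := by
        simpa using ((hasDerivAt_id x).sub_const A).div_const R
      have hpoly := (Polynomial.derivative^[j] (mpZ ^ q)).hasDerivAt ((x - A) / R)
      have hcomp := (hpoly.comp x hinner).const_mul (R⁻¹ ^ j)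
      refine hcomp.congr_deriv ?_
      rw [hΦdef]
      simp only
      rw [Function.iterate_succ_apply', pow_succ]
      ring
    have hΦc : ∀ j, Continuous (Φ j) := by
      intro j
      have h : Continuous fun x : ℝ => (x - A) / R :=
        (continuous_id.sub continuous_const).div_const R
      exact continuous_const.mul ((Polynomial.continuous _).comp h)
    have hΦeval : ∀ j ≤ q, ∀ x : ℝ,
        Φ j x = R⁻¹ ^ j * (((x - A)/R * (1 - (x - A)/R)) ^ (q - j)
          * (mpPsi q j).eval ((x - A)/R)) := by
      intro j hj x
      rw [hΦdef]
      simp only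
      rw [iter_deriv_mpZ_pow q j hj]
      simp [mpZ_eval]
    have hzero : ∀ j, j < q → Φ j A = 0 ∧ Φ j B = 0 := by
      intro j hj
      constructor
      · rw [hΦeval j hj.le A]
        simp [zero_pow (by omega : q - j ≠ 0)]
      · rw [hΦeval j hj.le B]
        rw [hBdef]
        have : (A + R - A) / R = 1 := by field_simp; ring
        rw [this]
        simp [zero_pow (by omega : q - j ≠ 0)]
    have hΦ0 : ∀ x : ℝ, Φ 0 x = ((x - A)/R * (1 - (x - A)/R)) ^ q := by
      intro x
      rw [hΦeval 0 (by omega) x]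
      simp [mpPsi]
    have hΦ0nonneg : ∀ x ∈ Set.Icc A B, 0 ≤ Φ 0 x := by
      intro x hx
      rw [hΦ0 x]
      obtain ⟨h0, h1⟩ := hy01 x hx
      exact pow_nonneg (mul_nonneg h0 (by linarith)) q
    -- derivative and continuity facts for V
    have hVd : ∀ j < m, ∀ x ∈ Set.uIcc A B, HasDerivAt (V j) (V (j+1) x) x := by
      intro j hj x hx
      rw [huIcc] at hx
      have hxt : t₀ < x := lt_of_lt_of_le hA hx.1
      have hmem : Set.Ici t₀ ∈ nhds x := Ici_mem_nhds hxt
      have hdiff : DifferentiableWithinAt ℝ (iteratedDerivWithin j u (Set.Ici t₀))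
          (Set.Ici t₀) x :=
        (hu.differentiableOn_iteratedDerivWithin (by exact_mod_cast hj)
          (uniqueDiffOn_Ici t₀)) x (hsub hx)
      have h := hdiff.hasDerivWithinAt.hasDerivAt hmem
      rwa [← iteratedDerivWithin_succ] at h
    have hVc : ∀ j ≤ m, ContinuousOn (V j) (Set.uIcc A B) := by
      intro j hj
      rw [huIcc]
      exact (hu.continuousOn_iteratedDerivWithin (by exact_mod_cast hj)
        (uniqueDiffOn_Ici t₀)).mono hsub
    have hu_cont : ContinuousOn u (Set.Icc A B) := hu.continuousOn.mono hsub
    have hup_cont : ContinuousOn (fun x => u x ^ p) (Set.Icc A B) := by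
      apply ContinuousOn.rpow_const hu_cont
      intro x hx
      exact Or.inl (ne_of_gt (lt_of_lt_of_le hs₀ (hus x hx)))
    -- the central integral
    set I : ℝ := ∫ x in A..B, u x ^ p * Φ 0 x with hIdef
    have hIint : IntervalIntegrable (fun x => u x ^ p * Φ 0 x) MeasureTheory.volume A B := by
      apply ContinuousOn.intervalIntegrable
      rw [huIcc]
      exact hup_cont.mul (hΦc 0).continuousOn
    -- lower bound for I
    have hlow : s₀ ^ p * (1/8 : ℝ) ^ q * (R / 4) ≤ I := by
      have hab1 : A ≤ A + R/4 := by linarith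
      have hab2 : A + R/4 ≤ A + R/2 := by linarith
      have hab3 : A + R/2 ≤ B := by rw [hBdef]; linarith
      have hIcc' : Set.Icc (A + R/4) (A + R/2) ⊆ Set.Icc A B :=
        Set.Icc_subset_Icc hab1 hab3
      have hptc : ∀ x ∈ Set.Icc (A + R/4) (A + R/2),
          s₀ ^ p * (1/8 : ℝ) ^ q ≤ u x ^ p * Φ 0 x := by
        intro x hx
        have hx' : x ∈ Set.Icc A B := hIcc' hx
        have hy : (x - A)/R ∈ Set.Icc (1/4 : ℝ) (1/2 : ℝ) := by
          constructor
          · rw [le_div_iff₀ hR0]; linarith [hx.1]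
          · rw [div_le_iff₀ hR0]; linarith [hx.2]
        have hz : (1/8 : ℝ) ≤ (x - A)/R * (1 - (x - A)/R) := by nlinarith [hy.1, hy.2]
        have h1 : s₀ ^ p ≤ u x ^ p := Real.rpow_le_rpow hs₀.le (hus x hx') (by positivity)
        have h2 : (1/8 : ℝ) ^ q ≤ Φ 0 x := by
          rw [hΦ0 x]
          exact pow_le_pow_left₀ (by norm_num) hz q
        have hup0 : 0 ≤ u x ^ p := Real.rpow_nonneg (hu0 x hx') p
        nlinarith [Real.rpow_nonneg hs₀.le p, pow_nonneg (by norm_num : (0:ℝ) ≤ 1/8) q]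
      calc s₀ ^ p * (1/8 : ℝ) ^ q * (R / 4)
          = ∫ _x in (A + R/4)..(A + R/2), s₀ ^ p * (1/8 : ℝ) ^ q := by
            rw [intervalIntegral.integral_const, smul_eq_mul]
            ring
        _ ≤ ∫ x in (A + R/4)..(A + R/2), u x ^ p * Φ 0 x := by
            apply intervalIntegral.integral_mono_on hab2
              (intervalIntegrable_const)
              (hIint.mono_set (by rw [huIcc, Set.uIcc_of_le hab2]; exact hIcc'))
            exact hptc
        _ ≤ I := by
            apply intervalIntegral.integral_mono_interval hab1 hab2 hab3 _ hIint
            refine (MeasureTheory.ae_restrict_iff' measurableSet_Ioc).2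
              (MeasureTheory.ae_of_all _ ?_)
            intro x hx
            simp only [Pi.zero_apply]
            have hx' : x ∈ Set.Icc A B := ⟨hx.1.le, hx.2⟩
            exact mul_nonneg (Real.rpow_nonneg (hu0 x hx') p) (hΦ0nonneg x hx')
    have hI0 : 0 ≤ I := le_trans (by positivity) hlow
    -- upper bound for I
    have hfu_cont : ContinuousOn (fun x => f x (u x)) (Set.Icc A B) :=
      by have := hf.comp_continuousOn (continuousOn_id.prodMk hu_cont); exact this
    have hsum_int : ∀ k ∈ Finset.Icc 1 m,
        IntervalIntegrable (fun x => a k * (V k x * Φ 0 x)) MeasureTheory.volume A B := by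
      intro k hk
      obtain ⟨_, hk2⟩ := Finset.mem_Icc.mp hk
      exact (continuousOn_const.mul ((hVc k hk2).mul (hΦc 0).continuousOn)).intervalIntegrable
    have hb1 : I ≤ ∫ x in A..B, f x (u x) * Φ 0 x := by
      apply intervalIntegral.integral_mono_on hAB hIint
      · apply ContinuousOn.intervalIntegrable
        rw [huIcc]
        exact hfu_cont.mul (hΦc 0).continuousOn
      · intro x hx
        exact mul_le_mul_of_nonneg_right (hgrowth x (u x) (hus x hx)) (hΦ0nonneg x hx)
    have hb2 : (∫ x in A..B, f x (u x) * Φ 0 x)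
        = ∑ k ∈ Finset.Icc 1 m, a k * ∫ x in A..B, V k x * Φ 0 x := by
      have e : Set.EqOn (fun x => f x (u x) * Φ 0 x)
          (fun x => ∑ k ∈ Finset.Icc 1 m, a k * (V k x * Φ 0 x)) (Set.uIcc A B) := by
        intro x hx
        rw [huIcc] at hx
        simp only
        rw [← heq x (hts x hx), Finset.sum_mul]
        exact Finset.sum_congr rfl fun k _ => mul_assoc _ _ _
      rw [intervalIntegral.integral_congr e, intervalIntegral.integral_finset_sum hsum_int]
      exact Finset.sum_congr rfl fun k _ => intervalIntegral.integral_const_mul _ _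
    have hterm : ∀ k ∈ Finset.Icc 1 m,
        a k * ∫ x in A..B, V k x * Φ 0 x
          ≤ |a k| * (ε * I + ε ^ (1 - p') * D k ^ p' * (R * R ^ (-p'))) := by
      intro k hk
      obtain ⟨hk1, hk2⟩ := Finset.mem_Icc.mp hk
      have hibp : (∫ x in A..B, V k x * Φ 0 x)
          = (-1 : ℝ) ^ k * ∫ x in A..B, u x * Φ k x := by
        have h := ibp_iter k V Φ (fun j hj => hVd j (lt_of_lt_of_le hj hk2))
          (fun j hj => hVc j (le_trans hj hk2))
          (fun j _ x _ => hΦd j x)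
          (fun j _ => (hΦc j).continuousOn)
          (fun j hj => hzero j (lt_of_lt_of_le hj (le_trans hk2 hmq)))
        rw [h, show V 0 = u from iteratedDerivWithin_zero]
      have hptw : ∀ x ∈ Set.Icc A B, |u x * Φ k x|
          ≤ ε * (u x ^ p * Φ 0 x) + ε ^ (1 - p') * (R⁻¹ ^ k * D k) ^ p' := by
        intro x hx
        set y : ℝ := (x - A) / R with hydef
        obtain ⟨hy0, hy1⟩ := hy01 x hx
        have hz0 : 0 ≤ y * (1 - y) := mul_nonneg hy0 (by linarith)
        have hz1 : y * (1 - y) ≤ 1 := by nlinarith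
        have habs : |u x * Φ k x| = u x * |Φ k x| := by
          rw [abs_mul, abs_of_nonneg (hu0 x hx)]
        have hΦbound : |Φ k x| ≤ R⁻¹ ^ k * ((y * (1 - y)) ^ (q - k) * D k) := by
          rw [hΦeval k (le_trans hk2 hmq) x]
          rw [abs_mul, abs_mul, abs_of_nonneg (pow_nonneg (inv_nonneg.2 hR0.le) k),
            abs_of_nonneg (pow_nonneg hz0 (q - k))]
          exact mul_le_mul_of_nonneg_left (mul_le_mul_of_nonneg_left (hDb k y ⟨hy0, hy1⟩)
            (pow_nonneg hz0 _)) (pow_nonneg (inv_nonneg.2 hR0.le) k)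
        calc |u x * Φ k x| = u x * |Φ k x| := habs
          _ ≤ u x * (R⁻¹ ^ k * ((y * (1 - y)) ^ (q - k) * D k)) :=
              mul_le_mul_of_nonneg_left hΦbound (hu0 x hx)
          _ ≤ ε * (u x ^ p * (y * (1 - y)) ^ q) + ε ^ (1 - p') * (R⁻¹ ^ k * D k) ^ p' :=
              pointwise_young hpq hk1 (hkq k hk) (hD0 k) hε (hu0 x hx) hz0 hz1
                (pow_nonneg (inv_nonneg.2 hR0.le) k)
          _ = ε * (u x ^ p * Φ 0 x) + ε ^ (1 - p') * (R⁻¹ ^ k * D k) ^ p' := by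
              rw [hΦ0 x]
      have hint1 : IntervalIntegrable (fun x => |u x * Φ k x|) MeasureTheory.volume A B := by
        apply ContinuousOn.intervalIntegrable
        rw [huIcc]
        exact (hu_cont.mul (hΦc k).continuousOn).abs
      have hJ : (∫ x in A..B, |u x * Φ k x|)
          ≤ ε * I + ε ^ (1 - p') * (R⁻¹ ^ k * D k) ^ p' * R := by
        calc (∫ x in A..B, |u x * Φ k x|)
            ≤ ∫ x in A..B, (ε * (u x ^ p * Φ 0 x) + ε ^ (1-p') * (R⁻¹ ^ k * D k) ^ p') :=
              intervalIntegral.integral_mono_on hAB hint1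
                ((hIint.const_mul ε).add intervalIntegrable_const) hptw
          _ = ε * I + ε ^ (1 - p') * (R⁻¹ ^ k * D k) ^ p' * R := by
              rw [intervalIntegral.integral_add (hIint.const_mul ε) intervalIntegrable_const,
                intervalIntegral.integral_const_mul, intervalIntegral.integral_const,
                smul_eq_mul, hIdef, hBdef]
              ring
      have hconst : ε ^ (1 - p') * (R⁻¹ ^ k * D k) ^ p' * R
          ≤ ε ^ (1 - p') * D k ^ p' * (R * R ^ (-p')) := by
        have h1 : (R⁻¹ ^ k * D k) ^ p' = (R⁻¹ ^ k) ^ p' * D k ^ p' :=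
          Real.mul_rpow (pow_nonneg (inv_nonneg.2 hR0.le) k) (hD0 k)
        have h2 : R⁻¹ ^ k ≤ R⁻¹ := by
          have h2' := pow_le_pow_of_le_one (inv_nonneg.2 hR0.le)
            (inv_le_one_of_one_le₀ hR1) hk1
          rwa [pow_one] at h2'
        have h3 : (R⁻¹ ^ k) ^ p' ≤ R ^ (-p') := by
          have h4 : (R⁻¹ ^ k) ^ p' ≤ (R⁻¹) ^ p' :=
            Real.rpow_le_rpow (pow_nonneg (inv_nonneg.2 hR0.le) k) h2 hp'pos.le
          rwa [Real.inv_rpow hR0.le, ← Real.rpow_neg hR0.le] at h4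
        have e1 : ε ^ (1 - p') * (R⁻¹ ^ k * D k) ^ p' * R
            = (ε ^ (1 - p') * D k ^ p' * R) * (R⁻¹ ^ k) ^ p' := by rw [h1]; ring
        have e2 : ε ^ (1 - p') * D k ^ p' * (R * R ^ (-p'))
            = (ε ^ (1 - p') * D k ^ p' * R) * R ^ (-p') := by ring
        rw [e1, e2]
        exact mul_le_mul_of_nonneg_left h3
          (mul_nonneg (mul_nonneg (Real.rpow_nonneg hε.le _) (Real.rpow_nonneg (hD0 k) _))
            hR0.le)
      calc a k * ∫ x in A..B, V k x * Φ 0 x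
          = a k * ((-1 : ℝ) ^ k * ∫ x in A..B, u x * Φ k x) := by rw [hibp]
        _ ≤ |a k * ((-1 : ℝ) ^ k * ∫ x in A..B, u x * Φ k x)| := le_abs_self _
        _ = |a k| * |∫ x in A..B, u x * Φ k x| := by
            rw [abs_mul, abs_mul, abs_pow, abs_neg, abs_one, one_pow, one_mul]
        _ ≤ |a k| * ∫ x in A..B, |u x * Φ k x| :=
            mul_le_mul_of_nonneg_left
              (intervalIntegral.abs_integral_le_integral_abs hAB) (abs_nonneg _)
        _ ≤ |a k| * (ε * I + ε ^ (1 - p') * (R⁻¹ ^ k * D k) ^ p' * R) :=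
            mul_le_mul_of_nonneg_left hJ (abs_nonneg _)
        _ ≤ |a k| * (ε * I + ε ^ (1 - p') * D k ^ p' * (R * R ^ (-p'))) := by
            apply mul_le_mul_of_nonneg_left _ (abs_nonneg _)
            linarith [hconst]
    have hIup : I ≤ ∑ k ∈ Finset.Icc 1 m,
        |a k| * (ε * I + ε ^ (1 - p') * D k ^ p' * (R * R ^ (-p'))) := by
      calc I ≤ ∫ x in A..B, f x (u x) * Φ 0 x := hb1
        _ = ∑ k ∈ Finset.Icc 1 m, a k * ∫ x in A..B, V k x * Φ 0 x := hb2
        _ ≤ _ := Finset.sum_le_sum hterm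
    have hsplit : (∑ k ∈ Finset.Icc 1 m,
          |a k| * (ε * I + ε ^ (1 - p') * D k ^ p' * (R * R ^ (-p'))))
        = S * (ε * I) + C₁ * (R * R ^ (-p')) := by
      have e : ∀ k ∈ Finset.Icc 1 m,
          |a k| * (ε * I + ε ^ (1 - p') * D k ^ p' * (R * R ^ (-p')))
            = |a k| * (ε * I) + (|a k| * D k ^ p') * (ε ^ (1 - p') * (R * R ^ (-p'))) :=
        fun k _ => by ring
      rw [Finset.sum_congr rfl e, Finset.sum_add_distrib, ← Finset.sum_mul, ← Finset.sum_mul,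
        hSdef, hC₁def]
      ring
    have hεS : S * ε ≤ 1 / 2 := by
      rw [hεdef, mul_one_div, div_le_div_iff₀ (by positivity) (by norm_num)]
      linarith
    have hW0 : 0 ≤ R * R ^ (-p') := mul_nonneg hR0.le (Real.rpow_nonneg hR0.le _)
    have hhalf : S * (ε * I) ≤ (1/2) * I := by
      have := mul_le_mul_of_nonneg_right hεS hI0
      calc S * (ε * I) = (S * ε) * I := by ring
        _ ≤ (1/2) * I := by linarith
    have hfinal : I ≤ 2 * C₁ * (R * R ^ (-p')) := by
      have h := hIup
      rw [hsplit] at h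
      linarith
    linarith [hlow, hfinal]
  -- derive the contradiction
  set c₀ : ℝ := s₀ ^ p * (1/8 : ℝ) ^ q with hc₀def
  have hc₀ : 0 < c₀ := by
    have := Real.rpow_pos_of_pos hs₀ p
    positivity
  set R₀ : ℝ := max 1 ((8 * C₁ + 1) / c₀) with hR₀def
  have hR₀1 : 1 ≤ R₀ := le_max_left _ _
  have hR₀pos : 0 < R₀ := lt_of_lt_of_le one_pos hR₀1
  have h := key R₀ hR₀1
  have hRp' : R₀ ≤ R₀ ^ p' := by
    calc R₀ = R₀ ^ (1:ℝ) := (Real.rpow_one _).symm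
      _ ≤ R₀ ^ p' := Real.rpow_le_rpow_of_exponent_le hR₀1 hp'1.le
  have hpow : 0 < R₀ ^ p' := Real.rpow_pos_of_pos hR₀pos _
  have h1 : R₀ * R₀ ^ (-p') ≤ 1 := by
    rw [Real.rpow_neg hR₀pos.le]
    rw [show R₀ * (R₀ ^ p')⁻¹ = R₀ / R₀ ^ p' by ring]
    rw [div_le_one hpow]
    exact hRp'
  have h2 : 2 * C₁ * (R₀ * R₀ ^ (-p')) ≤ 2 * C₁ := by
    apply mul_le_of_le_one_right (by linarith) h1
  have h3 : 8 * C₁ + 1 ≤ c₀ * R₀ := by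
    have := le_max_right 1 ((8 * C₁ + 1) / c₀)
    calc 8 * C₁ + 1 = c₀ * ((8 * C₁ + 1) / c₀) := by field_simp
      _ ≤ c₀ * R₀ := mul_le_mul_of_nonneg_left this hc₀.le
  have h4 : c₀ * (R₀ / 4) ≤ 2 * C₁ := le_trans (by rw [hc₀def]) (le_trans h h2)
  linarith
end
end

section
/- Let α > −2, let N ≥ 3 be an integer, and let (u, v) be an entire radial solution of Δ²u = |x|^α e^u normalized by u(0) = 0. Then: v(0) < 0; v is strictly increasing on (0, ∞); v(r) < 0 for every r ≥ 0; the limit ℓ := lim_{r→∞} v(r) exists in ℝ and satisfies ℓ ≤ 0; and u is strictly decreasing on (0, ∞). -/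
open MeasureTheory Real Set Filter

noncomputable section

/-- Comparison: if `g' ≤ f'` on `(a,b)` then `g b - g a ≤ f b - f a`. -/
lemma diff_le_aux {f g f' g' : ℝ → ℝ} {a b : ℝ} (hab : a ≤ b)
    (hf : ∀ x ∈ Icc a b, HasDerivAt f (f' x) x)
    (hg : ∀ x ∈ Icc a b, HasDerivAt g (g' x) x)
    (hle : ∀ x ∈ Ioo a b, g' x ≤ f' x) :
    g b - g a ≤ f b - f a := by
  have key := (convex_Icc a b).mul_sub_le_image_sub_of_le_deriv
    (f := fun x => f x - g x) (C := 0)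
    (fun x hx => ((hf x hx).sub (hg x hx)).continuousAt.continuousWithinAt)
    (by
      rw [interior_Icc]
      exact fun x hx => (((hf x (Ioo_subset_Icc_self hx)).sub
        (hg x (Ioo_subset_Icc_self hx))).differentiableAt).differentiableWithinAt)
    (by
      rw [interior_Icc]
      intro x hx
      rw [show deriv (fun x => f x - g x) x = f' x - g' x from
        ((hf x (Ioo_subset_Icc_self hx)).sub (hg x (Ioo_subset_Icc_self hx))).deriv]
      have := hle x hx; linarith)
    a ⟨le_rfl, hab⟩ b ⟨hab, le_rfl⟩ hab
  simp at key
  linarith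


/-- Facts about `F r = r^(N-1) * f'(r)` when `f'' + (N-1) f'/r = g`. -/
lemma lap_aux {N : ℕ} (hN : 3 ≤ N) {f g : ℝ → ℝ}
    (hf : ContDiffOn ℝ 2 f (Set.Ici 0))
    (hode : ∀ r > (0:ℝ), deriv (deriv f) r + ((N : ℝ) - 1) * deriv f r / r = g r) :
    ContinuousOn (fun r => r ^ (N - 1) * derivWithin f (Set.Ici 0) r) (Set.Ici 0) ∧
    (fun r : ℝ => r ^ (N - 1) * derivWithin f (Set.Ici 0) r) 0 = 0 ∧
    (∀ r > (0:ℝ), HasDerivAt (fun r => r ^ (N - 1) * derivWithin f (Set.Ici 0) r)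
      (r ^ (N - 1) * g r) r) ∧
    (∀ r > (0:ℝ), (fun r : ℝ => r ^ (N - 1) * derivWithin f (Set.Ici 0) r) r
      = r ^ (N - 1) * deriv f r) ∧
    (∀ r > (0:ℝ), HasDerivAt f (deriv f r) r) := by
  have hdw : ContDiffOn ℝ 1 (derivWithin f (Set.Ici 0)) (Set.Ici 0) :=
    hf.derivWithin (uniqueDiffOn_Ici 0) (by norm_num)
  have heq : ∀ r > (0:ℝ), derivWithin f (Set.Ici 0) r = deriv f r := by
    intro r hr
    exact derivWithin_of_mem_nhds (Ici_mem_nhds hr)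
  have hfo : ContDiffOn ℝ 2 f (Set.Ioi 0) := hf.mono Ioi_subset_Ici_self
  have hdf : ∀ r > (0:ℝ), HasDerivAt f (deriv f r) r := by
    intro r hr
    exact ((hfo.differentiableOn (by norm_num)).differentiableAt
      (Ioi_mem_nhds hr)).hasDerivAt
  have hdf1 : ContDiffOn ℝ 1 (deriv f) (Set.Ioi 0) :=
    hfo.deriv_of_isOpen isOpen_Ioi (by norm_num)
  have hddf : ∀ r > (0:ℝ), HasDerivAt (deriv f) (deriv (deriv f) r) r := by
    intro r hr
    exact ((hdf1.differentiableOn (by norm_num)).differentiableAt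
      (Ioi_mem_nhds hr)).hasDerivAt
  refine ⟨?_, ?_, ?_, fun r hr => by simp [heq r hr], hdf⟩
  · exact (continuous_pow (N-1)).continuousOn.mul hdw.continuousOn
  · simp [zero_pow (by omega : N - 1 ≠ 0)]
  · intro r hr
    have hne : r ≠ 0 := ne_of_gt hr
    have h1 : HasDerivAt (fun x : ℝ => x ^ (N - 1)) (((N - 1 : ℕ) : ℝ) * r ^ (N - 1 - 1)) r :=
      hasDerivAt_pow (N - 1) r
    have hG : HasDerivAt (fun x : ℝ => x ^ (N - 1) * deriv f x)
        (((N - 1 : ℕ) : ℝ) * r ^ (N - 1 - 1) * deriv f r + r ^ (N - 1) * deriv (deriv f) r) r :=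
      h1.mul (hddf r hr)
    have hval : ((N - 1 : ℕ) : ℝ) * r ^ (N - 1 - 1) * deriv f r
        + r ^ (N - 1) * deriv (deriv f) r = r ^ (N - 1) * g r := by
      rw [← hode r hr]
      have hpow : (r:ℝ) ^ (N - 1) = r ^ (N - 1 - 1) * r := by
        rw [← pow_succ]; congr 1; omega
      have hcast : ((N - 1 : ℕ) : ℝ) = (N : ℝ) - 1 := by
        have : (1:ℕ) ≤ N := by omega
        push_cast [Nat.cast_sub this]; ring
      rw [hcast, hpow]
      field_simp
      ring
    rw [← hval]
    apply hG.congr_of_eventuallyEq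
    filter_upwards [Ioi_mem_nhds hr] with x hx
    simp [heq x hx]

lemma lap_pos {N : ℕ} (hN : 3 ≤ N) {f g : ℝ → ℝ}
    (hf : ContDiffOn ℝ 2 f (Set.Ici 0))
    (hode : ∀ r > (0:ℝ), deriv (deriv f) r + ((N : ℝ) - 1) * deriv f r / r = g r)
    (hg : ∀ r > (0:ℝ), 0 < g r) :
    (∀ r > (0:ℝ), 0 < deriv f r) ∧ StrictMonoOn f (Set.Ici 0) := by
  obtain ⟨hc, h0, hd, he, hdf⟩ := lap_aux hN hf hode
  have hFmono : StrictMonoOn (fun r : ℝ => r ^ (N - 1) * derivWithin f (Set.Ici 0) r)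
      (Set.Ici 0) := by
    apply strictMonoOn_of_deriv_pos (convex_Ici 0) hc
    rw [interior_Ici]
    intro r hr
    rw [(hd r hr).deriv]
    exact mul_pos (pow_pos hr _) (hg r hr)
  have hpos : ∀ r > (0:ℝ), 0 < deriv f r := by
    intro r hr
    have hF : 0 < r ^ (N - 1) * deriv f r := by
      have := hFmono (self_mem_Ici) (le_of_lt hr : (0:ℝ) ≤ r) hr
      rw [h0] at this
      rwa [he r hr] at this
    have := div_pos hF (pow_pos hr (N - 1))
    rwa [mul_div_cancel_left₀ _ (ne_of_gt (pow_pos hr (N - 1)))] at this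
  refine ⟨hpos, ?_⟩
  apply strictMonoOn_of_deriv_pos (convex_Ici 0) hf.continuousOn
  rw [interior_Ici]
  exact fun r hr => hpos r hr

lemma lap_neg {N : ℕ} (hN : 3 ≤ N) {f g : ℝ → ℝ}
    (hf : ContDiffOn ℝ 2 f (Set.Ici 0))
    (hode : ∀ r > (0:ℝ), deriv (deriv f) r + ((N : ℝ) - 1) * deriv f r / r = g r)
    (hg : ∀ r > (0:ℝ), g r < 0) :
    StrictAntiOn f (Set.Ici 0) := by
  obtain ⟨hc, h0, hd, he, hdf⟩ := lap_aux hN hf hode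
  have hFanti : StrictAntiOn (fun r : ℝ => r ^ (N - 1) * derivWithin f (Set.Ici 0) r)
      (Set.Ici 0) := by
    apply strictAntiOn_of_deriv_neg (convex_Ici 0) hc
    rw [interior_Ici]
    intro r hr
    rw [(hd r hr).deriv]
    exact mul_neg_of_pos_of_neg (pow_pos hr _) (hg r hr)
  have hneg : ∀ r > (0:ℝ), deriv f r < 0 := by
    intro r hr
    have hF : r ^ (N - 1) * deriv f r < 0 := by
      have := hFanti (self_mem_Ici) (le_of_lt hr : (0:ℝ) ≤ r) hr
      rw [h0] at this
      rwa [he r hr] at this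
    have := div_neg_of_neg_of_pos hF (pow_pos hr (N - 1))
    rwa [mul_div_cancel_left₀ _ (ne_of_gt (pow_pos hr (N - 1)))] at this
  apply strictAntiOn_of_deriv_neg (convex_Ici 0) hf.continuousOn
  rw [interior_Ici]
  exact fun r hr => hneg r hr

lemma blowup {u : ℝ → ℝ} {R K : ℝ} (hK : 0 < K) (hR : 0 ≤ R)
    (hcont : ContinuousOn u (Set.Ici 0))
    (hstar : ∀ r, R ≤ r → ∀ ε : ℝ, 0 < ε → ε ≤ 1/2 →
      u r + K * ε ^ 4 * Real.exp (u r / 2) ≤ u (r + 4 * ε))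
    (hlarge : ∀ M : ℝ, ∃ r, R ≤ r ∧ M ≤ u r) : False := by
  obtain ⟨r₀, hr₀R, hur₀⟩ := hlarge (2 * Real.log (16 / K))
  have h16K : (0:ℝ) < 16 / K := by positivity
  have h16 : 16 / K ≤ Real.exp (u r₀ / 2) := by
    rw [← Real.exp_log h16K]
    exact Real.exp_le_exp.mpr (by linarith)
  set q : ℝ := Real.exp (-(1/8 : ℝ)) with hqdef
  have hq0 : 0 < q := Real.exp_pos _
  have hq9 : q ≤ 9/10 := by
    have h := Real.add_one_le_exp (1/8 : ℝ)
    have : q = (Real.exp (1/8 : ℝ))⁻¹ := by rw [hqdef, ← Real.exp_neg]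
    rw [this]
    rw [inv_le_comm₀ (Real.exp_pos _) (by norm_num)]
    linarith
  have hq1 : q < 1 := by linarith
  set r : ℕ → ℝ := fun k => r₀ + 2 * ∑ j ∈ Finset.range k, q ^ j with hrdef
  have claim2 : ∀ k, r₀ ≤ r k := by
    intro k
    have : (0:ℝ) ≤ ∑ j ∈ Finset.range k, q ^ j :=
      Finset.sum_nonneg fun j _ => pow_nonneg hq0.le j
    simp only [hrdef]; linarith
  have claim1 : ∀ k, r k ≤ r₀ + 20 := by
    intro k
    have hgs := geom_sum_mul q k
    have hsn : (0:ℝ) ≤ ∑ j ∈ Finset.range k, q ^ j :=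
      Finset.sum_nonneg fun j _ => pow_nonneg hq0.le j
    have hqk : (0:ℝ) ≤ q ^ k := pow_nonneg hq0.le k
    have hsum10 : ∑ j ∈ Finset.range k, q ^ j ≤ 10 := by nlinarith
    simp only [hrdef]; linarith
  have hrsucc : ∀ k, r (k + 1) = r k + 4 * (q ^ k / 2) := by
    intro k
    simp only [hrdef, Finset.sum_range_succ]
    ring
  have claim3 : ∀ k : ℕ, u r₀ + k ≤ u (r k) := by
    intro k
    induction k with
    | zero => simp [hrdef]
    | succ k ih =>
      have hqk1 : q ^ k ≤ 1 := pow_le_one₀ hq0.le hq1.le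
      have hqkpos : 0 < q ^ k := pow_pos hq0 k
      have happ := hstar (r k) (le_trans hr₀R (claim2 k)) (q ^ k / 2)
        (by positivity) (by linarith)
      rw [← hrsucc k] at happ
      have hexp : Real.exp ((u r₀ + k) / 2) ≤ Real.exp (u (r k) / 2) :=
        Real.exp_le_exp.mpr (by linarith)
      have hgain : (1:ℝ) ≤ K * (q ^ k / 2) ^ 4 * Real.exp ((u r₀ + k) / 2) := by
        have e1 : (q ^ k / 2) ^ 4 = Real.exp (-((k:ℝ)/2)) / 16 := by
          rw [div_pow, ← pow_mul]
          norm_num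
          rw [hqdef, ← Real.exp_nat_mul]
          congr 1
          push_cast
          ring
        have e2 : Real.exp ((u r₀ + (k:ℝ)) / 2)
            = Real.exp (u r₀ / 2) * Real.exp ((k:ℝ)/2) := by
          rw [← Real.exp_add]; ring_nf
        have e3 : Real.exp (-((k:ℝ)/2)) * Real.exp ((k:ℝ)/2) = 1 := by
          rw [← Real.exp_add]; norm_num
        have e4 : K * (q ^ k / 2) ^ 4 * Real.exp ((u r₀ + (k:ℝ)) / 2)
            = K / 16 * Real.exp (u r₀ / 2)
              * (Real.exp (-((k:ℝ)/2)) * Real.exp ((k:ℝ)/2)) := by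
          rw [e1, e2]; ring
        rw [e4, e3, mul_one]
        have h5 : K / 16 * (16 / K) ≤ K / 16 * Real.exp (u r₀ / 2) :=
          mul_le_mul_of_nonneg_left h16 (by positivity)
        have h6 : K / 16 * (16 / K) = 1 := by field_simp
        linarith
      have hmul : K * (q ^ k / 2) ^ 4 * Real.exp ((u r₀ + k) / 2)
          ≤ K * (q ^ k / 2) ^ 4 * Real.exp (u (r k) / 2) :=
        mul_le_mul_of_nonneg_left hexp (by positivity)
      push_cast
      push_cast at ih
      linarith
  -- contradiction via boundedness on a compact interval
  have hsub : Icc r₀ (r₀ + 20) ⊆ Set.Ici (0:ℝ) := fun y hy => le_trans (le_trans hR hr₀R) hy.1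
  obtain ⟨x, hx, hmax⟩ := isCompact_Icc.exists_isMaxOn ⟨r₀, le_rfl, by linarith⟩
    (hcont.mono hsub)
  set k : ℕ := ⌈u x - u r₀⌉₊ + 1 with hkdef
  have h1 := claim3 k
  have h2 : u (r k) ≤ u x := hmax ⟨claim2 k, claim1 k⟩
  have h3 : u x - u r₀ ≤ (⌈u x - u r₀⌉₊ : ℝ) := Nat.le_ceil _
  have h4 : ((⌈u x - u r₀⌉₊ : ℝ)) + 1 = (k : ℝ) := by rw [hkdef]; push_cast; ring
  linarith

lemma stepC {N : ℕ} {α : ℝ} {u v W : ℝ → ℝ} {R₂ r t : ℝ}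
    (hN : 3 ≤ N) (hα : -2 < α)
    (hR₂1 : 1 ≤ R₂) (hr : R₂ ≤ r) (hrt : r < t) (htr2 : t ≤ r + 2)
    (hWd : ∀ s > (0:ℝ), HasDerivAt W (s ^ (N - 1) * (s ^ α * Real.exp (u s))) s)
    (hWe : ∀ s > (0:ℝ), W s = s ^ (N - 1) * deriv v s)
    (hdvpos : ∀ s > (0:ℝ), 0 < deriv v s)
    (humonoW : ∀ x y, R₂ ≤ x → x ≤ y → u x ≤ u y)
    (hexp2 : (3:ℝ) ^ (N + 1) * r ^ 2 ≤ Real.exp (u r / 2)) :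
    (t - r) * Real.exp (u r / 2) ≤ deriv v t := by
  have hr1 : (1:ℝ) ≤ r := le_trans hR₂1 hr
  have h0r : (0:ℝ) < r := by linarith
  have h0t : (0:ℝ) < t := by linarith
  have ht3r : t ≤ 3 * r := by linarith
  set m : ℝ := r ^ (N - 1) * (((3 * r) ^ 2)⁻¹ * Real.exp (u r)) with hmdef
  have hWgrow : m * (t - r) ≤ W t - W r := by
    have key := diff_le_aux (f := W) (g := fun s => m * s)
      (f' := fun s => s ^ (N - 1) * (s ^ α * Real.exp (u s)))
      (g' := fun s => m * 1) hrt.le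
      (fun x hx => hWd x (lt_of_lt_of_le h0r hx.1))
      (fun x hx => (hasDerivAt_id x).const_mul m)
      (fun x hx => by
        show m * 1 ≤ x ^ (N - 1) * (x ^ α * Real.exp (u x))
        have hx1 : (1:ℝ) ≤ x := le_trans hr1 hx.1.le
        have hxr : r ≤ x := hx.1.le
        have hx3r : x ≤ 3 * r := by have := hx.2; linarith
        have comp1 : r ^ (N - 1) ≤ x ^ (N - 1) :=
          pow_le_pow_left₀ (by linarith) hxr _
        have comp2 : ((3 * r) ^ 2)⁻¹ ≤ x ^ α := by
          have e1 : x ^ (-(2:ℝ)) ≤ x ^ α :=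
            Real.rpow_le_rpow_of_exponent_le hx1 (by linarith)
          have e2 : x ^ (-(2:ℝ)) = (x ^ (2:ℕ))⁻¹ := by
            rw [Real.rpow_neg (by linarith), ← Real.rpow_natCast x 2]
            norm_num
          have e3 : ((3 * r) ^ 2)⁻¹ ≤ (x ^ (2:ℕ))⁻¹ := by
            apply inv_anti₀ (by positivity)
            nlinarith
          rw [e2] at e1
          exact le_trans e3 e1
        have comp3 : Real.exp (u r) ≤ Real.exp (u x) :=
          Real.exp_le_exp.mpr (humonoW r x hr hxr)
        rw [mul_one, hmdef]
        have hxα : (0:ℝ) ≤ x ^ α := Real.rpow_nonneg (by linarith) α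
        have inner : ((3 * r) ^ 2)⁻¹ * Real.exp (u r) ≤ x ^ α * Real.exp (u x) :=
          mul_le_mul comp2 comp3 (Real.exp_pos _).le hxα
        exact mul_le_mul comp1 inner (by positivity) (by positivity))
    linarith
  have hWr : 0 < W r := by
    rw [hWe r h0r]
    exact mul_pos (by positivity) (hdvpos r h0r)
  have hWt : m * (t - r) ≤ W t := by linarith
  have hpwt : (0:ℝ) < t ^ (N - 1) := by positivity
  have hWet := hWe t h0t
  have hfinal : (t - r) * Real.exp (u r / 2) * t ^ (N - 1) ≤ W t := by
    have e5 : Real.exp (u r) = Real.exp (u r / 2) * Real.exp (u r / 2) := by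
      rw [← Real.exp_add]; ring_nf
    have e6 : (3:ℝ) ^ (N + 1) = 3 ^ (N - 1) * 3 ^ 2 := by
      rw [← pow_add]; congr 1; omega
    have hkey : Real.exp (u r / 2) * t ^ (N - 1) ≤ m := by
      have h7 : t ^ (N - 1) ≤ (3 * r) ^ (N - 1) :=
        pow_le_pow_left₀ (by linarith) ht3r _
      have h8 : Real.exp (u r / 2) * ((3 * r) ^ (N - 1) * (3 * r) ^ 2)
          ≤ r ^ (N - 1) * Real.exp (u r) := by
        have e7 : (3 * r) ^ (N - 1) * (3 * r) ^ 2
            = 3 ^ (N + 1) * (r ^ (N - 1) * r ^ 2) := by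
          rw [mul_pow, mul_pow, e6]; ring
        have hkey2 := mul_le_mul_of_nonneg_right hexp2
          (by positivity : (0:ℝ) ≤ Real.exp (u r / 2) * r ^ (N - 1))
        rw [e7, e5]
        nlinarith [hkey2]
      have h9 : (0:ℝ) < (3 * r) ^ 2 := by positivity
      rw [hmdef]
      rw [show r ^ (N-1) * (((3*r) ^ 2)⁻¹ * Real.exp (u r))
          = r ^ (N-1) * Real.exp (u r) / (3*r) ^ 2 by field_simp]
      rw [le_div_iff₀ h9]
      calc Real.exp (u r / 2) * t ^ (N - 1) * (3 * r) ^ 2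
          ≤ Real.exp (u r / 2) * (3 * r) ^ (N - 1) * (3 * r) ^ 2 :=
            mul_le_mul_of_nonneg_right
              (mul_le_mul_of_nonneg_left h7 (Real.exp_pos (u r / 2)).le) h9.le
        _ = Real.exp (u r / 2) * ((3 * r) ^ (N - 1) * (3 * r) ^ 2) := by ring
        _ ≤ r ^ (N - 1) * Real.exp (u r) := h8
    calc (t - r) * Real.exp (u r / 2) * t ^ (N - 1)
        = (Real.exp (u r / 2) * t ^ (N - 1)) * (t - r) := by ring
      _ ≤ m * (t - r) := mul_le_mul_of_nonneg_right hkey (by linarith)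
      _ ≤ W t := hWt
  rw [hWet] at hfinal
  calc (t - r) * Real.exp (u r / 2)
      = (t - r) * Real.exp (u r / 2) * t ^ (N - 1) / t ^ (N - 1) := by field_simp
    _ ≤ t ^ (N - 1) * deriv v t / t ^ (N - 1) := (div_le_div_iff_of_pos_right hpwt).mpr hfinal
    _ = deriv v t := by field_simp

lemma stepD {N : ℕ} {u v Z : ℝ → ℝ} {R₂ r ε : ℝ}
    (hN : 3 ≤ N)
    (hR₂1 : 1 ≤ R₂) (hr : R₂ ≤ r) (hε : 0 < ε) (hε2 : ε ≤ 1/2)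
    (hC : ∀ t, r < t → t ≤ r + 2 → (t - r) * Real.exp (u r / 2) ≤ deriv v t)
    (hdv : ∀ s > (0:ℝ), HasDerivAt v (deriv v s) s)
    (hdu : ∀ s > (0:ℝ), HasDerivAt u (deriv u s) s)
    (hZd : ∀ s > (0:ℝ), HasDerivAt Z (s ^ (N - 1) * v s) s)
    (hZe : ∀ s > (0:ℝ), Z s = s ^ (N - 1) * deriv u s)
    (hdupos : ∀ s, R₂ ≤ s → 0 < deriv u s)
    (humonoW : ∀ x y, R₂ ≤ x → x ≤ y → u x ≤ u y)
    (hvmono' : ∀ x y, 0 ≤ x → x ≤ y → v x ≤ v y)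
    (hvpos : ∀ s, R₂ ≤ s → 0 ≤ v s) :
    u r + ((3:ℝ) ^ (N - 1))⁻¹ * ε ^ 4 * Real.exp (u r / 2) ≤ u (r + 4 * ε) := by
  have hr1 : (1:ℝ) ≤ r := le_trans hR₂1 hr
  have h0r : (0:ℝ) < r := by linarith
  have hE : (0:ℝ) < Real.exp (u r / 2) := Real.exp_pos _
  -- D1
  have hv2 : ∀ s, r + 2 * ε ≤ s → s ≤ r + 4 * ε → ε ^ 2 * Real.exp (u r / 2) ≤ v s := by
    have key := diff_le_aux (f := v) (g := fun s => (ε * Real.exp (u r / 2)) * s)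
      (f' := fun s => deriv v s) (g' := fun s => (ε * Real.exp (u r / 2)) * 1)
      (by linarith : r + ε ≤ r + 2 * ε)
      (fun x hx => hdv x (by have := hx.1; linarith))
      (fun x hx => (hasDerivAt_id x).const_mul _)
      (fun x hx => by
        show (ε * Real.exp (u r / 2)) * 1 ≤ deriv v x
        have hx1 := hx.1
        have hx2 := hx.2
        have h := hC x (by linarith) (by linarith)
        have h2 : ε * Real.exp (u r / 2) ≤ (x - r) * Real.exp (u r / 2) :=
          mul_le_mul_of_nonneg_right (by linarith) hE.le
        linarith)
    have hv0 : 0 ≤ v (r + ε) := hvpos _ (by linarith)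
    have hring : (ε * Real.exp (u r / 2)) * (r + 2 * ε)
        - (ε * Real.exp (u r / 2)) * (r + ε) = ε ^ 2 * Real.exp (u r / 2) := by ring
    intro s hs1 hs2
    have hmono := hvmono' (r + 2 * ε) s (by linarith) hs1
    linarith
  -- D2
  have hdu2 : ∀ t, r + 3 * ε ≤ t → t ≤ r + 4 * ε →
      ((3:ℝ) ^ (N - 1))⁻¹ * ε ^ 3 * Real.exp (u r / 2) ≤ deriv u t := by
    intro t ht3 ht4
    have h0t : (0:ℝ) < t := by linarith
    have key := diff_le_aux (f := Z)
      (g := fun s => (r ^ (N - 1) * (ε ^ 2 * Real.exp (u r / 2))) * s)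
      (f' := fun s => s ^ (N - 1) * v s)
      (g' := fun s => (r ^ (N - 1) * (ε ^ 2 * Real.exp (u r / 2))) * 1)
      (by linarith : r + 2 * ε ≤ t)
      (fun x hx => hZd x (by have := hx.1; linarith))
      (fun x hx => (hasDerivAt_id x).const_mul _)
      (fun x hx => by
        show (r ^ (N - 1) * (ε ^ 2 * Real.exp (u r / 2))) * 1 ≤ x ^ (N - 1) * v x
        have hx1 := hx.1
        have hx2 := hx.2
        have comp1 : r ^ (N - 1) ≤ x ^ (N - 1) :=
          pow_le_pow_left₀ (by linarith) (by linarith) _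
        have compv : ε ^ 2 * Real.exp (u r / 2) ≤ v x :=
          hv2 x (by linarith) (by linarith)
        rw [mul_one]
        exact mul_le_mul comp1 compv (by positivity) (pow_nonneg (by linarith) _))
    have hZ2pos : 0 < Z (r + 2 * ε) := by
      rw [hZe _ (by linarith : (0:ℝ) < r + 2 * ε)]
      exact mul_pos (by positivity) (hdupos _ (by linarith))
    have hZt : r ^ (N - 1) * (ε ^ 2 * Real.exp (u r / 2)) * ε ≤ Z t := by
      have h1 : r ^ (N - 1) * (ε ^ 2 * Real.exp (u r / 2)) * ε
          ≤ r ^ (N - 1) * (ε ^ 2 * Real.exp (u r / 2)) * (t - (r + 2 * ε)) :=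
        mul_le_mul_of_nonneg_left (by linarith) (by positivity)
      have h2 : r ^ (N - 1) * (ε ^ 2 * Real.exp (u r / 2)) * (t - (r + 2 * ε))
          = r ^ (N - 1) * (ε ^ 2 * Real.exp (u r / 2)) * t
            - r ^ (N - 1) * (ε ^ 2 * Real.exp (u r / 2)) * (r + 2 * ε) := by ring
      linarith
    have hpwt : (0:ℝ) < t ^ (N - 1) := by positivity
    have h3N : (0:ℝ) < (3:ℝ) ^ (N - 1) := by positivity
    have hfinal : ((3:ℝ) ^ (N - 1))⁻¹ * ε ^ 3 * Real.exp (u r / 2) * t ^ (N - 1) ≤ Z t := by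
      have h7 : t ^ (N - 1) ≤ 3 ^ (N - 1) * r ^ (N - 1) := by
        have := pow_le_pow_left₀ (by linarith : (0:ℝ) ≤ t) (by linarith : t ≤ 3 * r) (N - 1)
        rwa [mul_pow] at this
      have h8 : ((3:ℝ) ^ (N - 1))⁻¹ * ε ^ 3 * Real.exp (u r / 2) * (3 ^ (N - 1) * r ^ (N - 1))
          = r ^ (N - 1) * (ε ^ 2 * Real.exp (u r / 2)) * ε := by
        field_simp
      calc ((3:ℝ) ^ (N - 1))⁻¹ * ε ^ 3 * Real.exp (u r / 2) * t ^ (N - 1)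
          ≤ ((3:ℝ) ^ (N - 1))⁻¹ * ε ^ 3 * Real.exp (u r / 2) * (3 ^ (N - 1) * r ^ (N - 1)) :=
            mul_le_mul_of_nonneg_left h7 (by positivity)
        _ = r ^ (N - 1) * (ε ^ 2 * Real.exp (u r / 2)) * ε := h8
        _ ≤ Z t := hZt
    rw [hZe t h0t] at hfinal
    calc ((3:ℝ) ^ (N - 1))⁻¹ * ε ^ 3 * Real.exp (u r / 2)
        = ((3:ℝ) ^ (N - 1))⁻¹ * ε ^ 3 * Real.exp (u r / 2) * t ^ (N - 1) / t ^ (N - 1) := by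
          field_simp
      _ ≤ t ^ (N - 1) * deriv u t / t ^ (N - 1) := (div_le_div_iff_of_pos_right hpwt).mpr hfinal
      _ = deriv u t := by field_simp
  -- D3
  have key := diff_le_aux (f := u)
    (g := fun s => (((3:ℝ) ^ (N - 1))⁻¹ * ε ^ 3 * Real.exp (u r / 2)) * s)
    (f' := fun s => deriv u s)
    (g' := fun s => (((3:ℝ) ^ (N - 1))⁻¹ * ε ^ 3 * Real.exp (u r / 2)) * 1)
    (by linarith : r + 3 * ε ≤ r + 4 * ε)
    (fun x hx => hdu x (by have := hx.1; linarith))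
    (fun x hx => (hasDerivAt_id x).const_mul _)
    (fun x hx => by
      show (((3:ℝ) ^ (N - 1))⁻¹ * ε ^ 3 * Real.exp (u r / 2)) * 1 ≤ deriv u x
      rw [mul_one]
      exact hdu2 x hx.1.le hx.2.le)
  have hu3 : u r ≤ u (r + 3 * ε) := humonoW r (r + 3 * ε) hr (by linarith)
  have hring : (((3:ℝ) ^ (N - 1))⁻¹ * ε ^ 3 * Real.exp (u r / 2)) * (r + 4 * ε)
      - (((3:ℝ) ^ (N - 1))⁻¹ * ε ^ 3 * Real.exp (u r / 2)) * (r + 3 * ε)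
      = ((3:ℝ) ^ (N - 1))⁻¹ * ε ^ 4 * Real.exp (u r / 2) := by ring
  linarith

lemma v_neg {N : ℕ} {α : ℝ} {u v : ℝ → ℝ} (hN : 3 ≤ N) (hα : -2 < α)
    (hu : ContDiffOn ℝ 2 u (Set.Ici 0)) (hv : ContDiffOn ℝ 2 v (Set.Ici 0))
    (hode1 : ∀ r > (0:ℝ), deriv (deriv u) r + ((N : ℝ) - 1) * deriv u r / r = v r)
    (hode2 : ∀ r > (0:ℝ), deriv (deriv v) r + ((N : ℝ) - 1) * deriv v r / r
      = r ^ α * Real.exp (u r))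
    (hvmono : StrictMonoOn v (Set.Ici 0))
    (hdvpos : ∀ r > (0:ℝ), 0 < deriv v r) :
    ∀ r, 0 ≤ r → v r < 0 := by
  by_contra hcon
  push_neg at hcon
  obtain ⟨r₀, hr₀0, hvr₀⟩ := hcon
  obtain ⟨hZc, hZ0, hZd, hZe, hduA⟩ := lap_aux hN hu hode1
  obtain ⟨hWc, hW0, hWd, hWe, hdvA⟩ := lap_aux hN hv hode2
  set Z : ℝ → ℝ := fun r => r ^ (N - 1) * derivWithin u (Set.Ici 0) r with hZdef
  set W : ℝ → ℝ := fun r => r ^ (N - 1) * derivWithin v (Set.Ici 0) r with hWdef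
  set a : ℝ := r₀ + 1 with hadef
  have ha1 : (1:ℝ) ≤ a := by simp [hadef]; linarith
  have ha0 : (0:ℝ) ≤ a := by linarith
  have hc : 0 < v a := lt_of_le_of_lt hvr₀ (hvmono hr₀0 ha0 (by simp [hadef]))
  set c : ℝ := v a with hcdef
  have hvc : ∀ x, a ≤ x → c ≤ v x := by
    intro x hx
    exact hvmono.monotoneOn ha0 (le_trans ha0 hx) hx
  have hNpos : (0:ℝ) < N := by positivity
  clear_value Z W a c
  -- Step A : growth of Z
  have hZgrow : ∀ r, a ≤ r → Z a - c / N * a ^ N + c / N * r ^ N ≤ Z r := by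
    intro r har
    have key := diff_le_aux (f := Z) (g := fun s => c / N * s ^ N)
      (f' := fun s => s ^ (N - 1) * v s) (g' := fun s => c * s ^ (N - 1)) har
      (fun x hx => hZd x (lt_of_lt_of_le (by linarith) hx.1))
      (fun x hx => by
        have h := (hasDerivAt_pow N x).const_mul (c / N)
        refine h.congr_deriv ?_
        have hN' : (N:ℝ) ≠ 0 := ne_of_gt hNpos
        beta_reduce
        field_simp)
      (fun x hx => by
        have hx0 : (0:ℝ) ≤ x := by have := hx.1; linarith
        have hvx : c ≤ v x := hvc x hx.1.le
        calc c * x ^ (N-1) ≤ v x * x ^ (N-1) := by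
              exact mul_le_mul_of_nonneg_right hvx (by positivity)
          _ = x ^ (N-1) * v x := by ring)
    linarith
  -- Step A': lower bound on deriv u
  set C₀ : ℝ := Z a - c / N * a ^ N with hC₀def
  set R₁ : ℝ := max a (2 * N * |C₀| / c + 1) with hR₁def
  clear_value C₀
  have hR₁a : a ≤ R₁ := le_max_left _ _
  have hR₁1 : (1:ℝ) ≤ R₁ := le_trans ha1 hR₁a
  have hR₁C : 2 * N * |C₀| / c + 1 ≤ R₁ := le_max_right _ _
  have hup : ∀ r, R₁ ≤ r → c / (2 * N) * r ≤ deriv u r := by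
    intro r hr
    have hr1 : (1:ℝ) ≤ r := le_trans hR₁1 hr
    have h0r : (0:ℝ) < r := by linarith
    have hZr := hZgrow r (le_trans hR₁a hr)
    have hrN : r ≤ r ^ N := le_self_pow₀ (by linarith) (by omega)
    have habs : |C₀| ≤ c / (2 * N) * r ^ N := by
      have h1 : 2 * N * |C₀| / c ≤ r := by linarith
      have h2 : 2 * N * |C₀| / c ≤ r ^ N := le_trans h1 hrN
      rw [div_le_iff₀ hc] at h2
      rw [← sub_nonneg]
      have : c / (2 * N) * r ^ N - |C₀| = (r ^ N * c - 2 * N * |C₀|) / (2 * N) := by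
        field_simp
      rw [this]
      apply div_nonneg _ (by positivity)
      linarith
    have hCabs : -C₀ ≤ |C₀| := neg_le_abs C₀
    have hZlow : c / (2 * N) * r * r ^ (N - 1) ≤ Z r := by
      have hNsucc : r ^ N = r ^ (N - 1) * r := by
        rw [← pow_succ]
        congr 1
        omega
      have : c / (2 * N) * r * r ^ (N - 1) = c / (2*N) * r ^ N := by
        rw [hNsucc]; ring
      rw [this]
      have hhalf : c / (2*N) * r ^ N = c / N * r ^ N - c / (2*N) * r ^ N := by
        field_simp
        ring
      rw [hhalf]
      linarith [hZr]
    have hpw : (0:ℝ) < r ^ (N - 1) := by positivity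
    have hZer := hZe r h0r
    rw [hZer] at hZlow
    calc c / (2 * N) * r = c / (2 * N) * r * r ^ (N-1) / r ^ (N-1) := by field_simp
      _ ≤ r ^ (N-1) * deriv u r / r ^ (N-1) := (div_le_div_iff_of_pos_right hpw).mpr hZlow
      _ = deriv u r := by field_simp
  have hdupos : ∀ r, R₁ ≤ r → 0 < deriv u r := by
    intro r hr
    have hr1 : (1:ℝ) ≤ r := le_trans hR₁1 hr
    have : 0 < c / (2 * N) * r := by positivity
    linarith [hup r hr]
  have humono : StrictMonoOn u (Set.Ici R₁) := by
    apply strictMonoOn_of_deriv_pos (convex_Ici R₁)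
      (hu.continuousOn.mono (Ici_subset_Ici.mpr (by linarith)))
    rw [interior_Ici]
    exact fun x hx => hdupos x hx.le
  have humonoW : ∀ x y, R₁ ≤ x → x ≤ y → u x ≤ u y := by
    intro x y hx hxy
    exact humono.monotoneOn hx (le_trans hx hxy) hxy
  -- Step B : quadratic lower bound for u
  set B : ℝ := c / (4 * N) with hBdef
  have hB : 0 < B := by rw [hBdef]; positivity
  set A : ℝ := u R₁ - B * R₁ ^ 2 with hAdef
  clear_value A B
  have hquad : ∀ r, R₁ ≤ r → A + B * r ^ 2 ≤ u r := by
    intro r hr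
    have h0R₁ : (0:ℝ) < R₁ := by linarith
    have key := diff_le_aux (f := u) (g := fun s => B * s ^ 2)
      (f' := fun s => deriv u s) (g' := fun s => B * (2 * s)) hr
      (fun x hx => hduA x (lt_of_lt_of_le h0R₁ hx.1))
      (fun x hx => by
        have h := (hasDerivAt_pow 2 x).const_mul B
        refine h.congr_deriv ?_
        beta_reduce
        push_cast
        ring)
      (fun x hx => by
        have hxR : R₁ ≤ x := hx.1.le
        have := hup x hxR
        have hBx : B * (2 * x) = c / (2 * N) * x := by
          rw [hBdef]; field_simp; ring
        show B * (2 * x) ≤ deriv u x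
        linarith)
    rw [hAdef]
    linarith
  -- the scale R₂ beyond which exp (u r / 2) dominates 3^(N+1) r^2
  have hsq4 : ∀ x : ℝ, 0 ≤ x → x ^ 2 / 4 ≤ Real.exp x := by
    intro x hx
    have h := Real.add_one_le_exp (x / 2)
    have h2 : Real.exp x = Real.exp (x / 2) * Real.exp (x / 2) := by
      rw [← Real.exp_add]; ring_nf
    nlinarith [Real.exp_pos (x / 2)]
  set D : ℝ := 16 * 3 ^ (N + 1) * Real.exp (-A / 2) / B ^ 2 with hDdef
  have hD0 : 0 ≤ D := by rw [hDdef]; positivity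
  set R₂ : ℝ := max R₁ (Real.sqrt D) with hR₂def
  have hR₂R₁ : R₁ ≤ R₂ := le_max_left _ _
  have hR₂1 : (1:ℝ) ≤ R₂ := le_trans hR₁1 hR₂R₁
  have hexp2 : ∀ r, R₂ ≤ r → (3:ℝ) ^ (N + 1) * r ^ 2 ≤ Real.exp (u r / 2) := by
    intro r hr
    have hr1 : (1:ℝ) ≤ r := le_trans hR₂1 hr
    have hrR₁ : R₁ ≤ r := le_trans hR₂R₁ hr
    have h1 : A + B * r ^ 2 ≤ u r := hquad r hrR₁
    have h5 : D ≤ r ^ 2 := by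
      have hs : Real.sqrt D ≤ r := le_trans (le_max_right R₁ (Real.sqrt D)) hr
      calc D = Real.sqrt D ^ 2 := (Real.sq_sqrt hD0).symm
        _ ≤ r ^ 2 := by
            apply pow_le_pow_left₀ (Real.sqrt_nonneg D) hs
    have hexpprod : Real.exp (A / 2) * Real.exp (-A / 2) = 1 := by
      rw [← Real.exp_add]; ring_nf; exact Real.exp_zero
    have heqD : Real.exp (A / 2) * B ^ 2 * D / 16 = (3:ℝ) ^ (N + 1) := by
      rw [hDdef]
      have hB2 : (B:ℝ) ^ 2 ≠ 0 := by positivity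
      field_simp
      rw [← neg_div]
      linear_combination hexpprod
    have h4 : (B * r ^ 2 / 2) ^ 2 / 4 ≤ Real.exp (B * r ^ 2 / 2) :=
      hsq4 _ (by positivity)
    calc (3:ℝ) ^ (N + 1) * r ^ 2
        = Real.exp (A / 2) * B ^ 2 * D / 16 * r ^ 2 := by rw [heqD]
      _ ≤ Real.exp (A / 2) * B ^ 2 * (r ^ 2 * r ^ 2) / 16 := by
          have hnn : (0:ℝ) ≤ Real.exp (A / 2) * B ^ 2 * r ^ 2 / 16 := by positivity
          have h6 := mul_le_mul_of_nonneg_left h5 hnn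
          clear_value D
          linarith [h6]
      _ = Real.exp (A / 2) * ((B * r ^ 2 / 2) ^ 2 / 4) := by ring
      _ ≤ Real.exp (A / 2) * Real.exp (B * r ^ 2 / 2) :=
          mul_le_mul_of_nonneg_left h4 (Real.exp_pos _).le
      _ = Real.exp ((A + B * r ^ 2) / 2) := by rw [← Real.exp_add]; ring_nf
      _ ≤ Real.exp (u r / 2) := Real.exp_le_exp.mpr (by linarith)
  have hC : ∀ r, R₂ ≤ r → ∀ t, r < t → t ≤ r + 2 →
      (t - r) * Real.exp (u r / 2) ≤ deriv v t := by
    intro r hr t hrt htr2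
    exact stepC hN hα hR₂1 hr hrt htr2 hWd hWe
      (fun s hs => hdvpos s hs)
      (fun x y hx hxy => humonoW x y (le_trans hR₂R₁ hx) hxy)
      (hexp2 r hr)
  have hvmono' : ∀ x y, 0 ≤ x → x ≤ y → v x ≤ v y :=
    fun x y hx hxy => hvmono.monotoneOn hx (le_trans hx hxy) hxy
  have hstar : ∀ r, R₂ ≤ r → ∀ ε : ℝ, 0 < ε → ε ≤ 1/2 →
      u r + ((3:ℝ) ^ (N - 1))⁻¹ * ε ^ 4 * Real.exp (u r / 2) ≤ u (r + 4 * ε) := by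
    intro r hr ε he1 he2
    exact stepD hN hR₂1 hr he1 he2 (fun t => hC r hr t) hdvA hduA hZd hZe
      (fun s hs => hdupos s (le_trans hR₂R₁ hs))
      (fun x y hx hxy => humonoW x y (le_trans hR₂R₁ hx) hxy)
      hvmono'
      (fun s hs => le_of_lt (lt_of_lt_of_le hc
        (hvc s (le_trans (le_trans hR₁a hR₂R₁) hs))))
  have hlarge : ∀ M : ℝ, ∃ r, R₂ ≤ r ∧ M ≤ u r := by
    intro M
    have hx0 : 0 ≤ max 0 (M - A) := le_max_left _ _
    refine ⟨max R₂ (Real.sqrt (max 0 (M - A) / B)), le_max_left _ _, ?_⟩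
    set r : ℝ := max R₂ (Real.sqrt (max 0 (M - A) / B)) with hrdef
    have hrR₁ : R₁ ≤ r := le_trans hR₂R₁ (le_max_left _ _)
    have h1 : A + B * r ^ 2 ≤ u r := hquad r hrR₁
    have h2 : max 0 (M - A) / B ≤ r ^ 2 := by
      have hs : Real.sqrt (max 0 (M - A) / B) ≤ r := le_max_right _ _
      calc max 0 (M - A) / B = Real.sqrt (max 0 (M - A) / B) ^ 2 :=
            (Real.sq_sqrt (by positivity)).symm
        _ ≤ r ^ 2 := pow_le_pow_left₀ (Real.sqrt_nonneg _) hs 2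
    have h3 : max 0 (M - A) ≤ B * r ^ 2 := by
      have := (div_le_iff₀ hB).mp h2
      linarith
    have h4 : M - A ≤ max 0 (M - A) := le_max_right _ _
    linarith
  exact blowup (by positivity) (by linarith : (0:ℝ) ≤ R₂) hu.continuousOn hstar hlarge

/-- Basic qualitative properties of entire radial solutions for `N ≥ 3`, `α > -2`:
`v(0) < 0`, `v` is strictly increasing on `(0, ∞)`, `v < 0` everywhere on `[0, ∞)`,
`v` has a finite limit `ℓ ≤ 0` at infinity, and `u` is strictly decreasing on
`(0, ∞)`. -/
theorem qualitative_properties_entire_radial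
    (N : ℕ) (hN : 3 ≤ N) (α : ℝ) (hα : -2 < α)
    (u v : ℝ → ℝ) (h : IsEntireRadialSolution N α u v) :
    v 0 < 0 ∧ StrictMonoOn v (Set.Ioi 0) ∧ (∀ r : ℝ, 0 ≤ r → v r < 0) ∧
      (∃ ℓ : ℝ, ℓ ≤ 0 ∧ Filter.Tendsto v Filter.atTop (nhds ℓ)) ∧
      StrictAntiOn u (Set.Ioi 0) := by
  obtain ⟨hu, hv, hu0, hdu0, hdv0, hode1, hode2⟩ := h
  have hg : ∀ r > (0:ℝ), 0 < r ^ α * Real.exp (u r) :=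
    fun r hr => mul_pos (Real.rpow_pos_of_pos hr α) (Real.exp_pos _)
  obtain ⟨hdvpos, hvmono⟩ := lap_pos hN hv hode2 hg
  have hvneg : ∀ r, 0 ≤ r → v r < 0 := v_neg hN hα hu hv hode1 hode2 hvmono hdvpos
  refine ⟨hvneg 0 le_rfl, hvmono.mono Ioi_subset_Ici_self, fun r hr => hvneg r hr, ?_, ?_⟩
  · have hmono : Monotone (fun r : ℝ => v (max r 0)) := fun x y hxy =>
      hvmono.monotoneOn (le_max_right x 0) (le_max_right y 0) (max_le_max hxy le_rfl)
    have hbdd : BddAbove (Set.range fun r : ℝ => v (max r 0)) := by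
      refine ⟨0, ?_⟩
      rintro z ⟨r, rfl⟩
      exact (hvneg _ (le_max_right r 0)).le
    refine ⟨⨆ r : ℝ, v (max r 0), ?_, ?_⟩
    · exact ciSup_le fun r => (hvneg _ (le_max_right r 0)).le
    · have ht := tendsto_atTop_ciSup hmono hbdd
      apply ht.congr'
      filter_upwards [eventually_ge_atTop (0:ℝ)] with r hr
      rw [max_eq_left hr]
  · have := lap_neg hN hu hode1 (fun r hr => hvneg r hr.le)
    exact this.mono Ioi_subset_Ici_self
end
end

section
/- Let α > −2, let N ≥ 3 be an integer, and let (u, v) be an entire radial solution of Δ²u = |x|^α e^u normalized by u(0) = 0, with β = v(0). Then for every r > 0 one has e^{u(r)} ≤ −β (2+α)(N+α) r^{−(2+α)}. -/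
open MeasureTheory Real Set Filter

noncomputable section

lemma mono_aux {f f' : ℝ → ℝ} {a b : ℝ} (hab : a ≤ b)
    (hc : ContinuousOn f (Set.Icc a b))
    (hd : ∀ x ∈ Set.Ioo a b, HasDerivAt f (f' x) x)
    (h0 : ∀ x ∈ Set.Ioo a b, 0 ≤ f' x) : f a ≤ f b := by
  have H := monotoneOn_of_deriv_nonneg (convex_Icc a b) hc
    (fun x hx => by
      rw [interior_Icc] at hx
      exact (hd x hx).differentiableAt.differentiableWithinAt)
    (fun x hx => by
      rw [interior_Icc] at hx
      rw [(hd x hx).deriv]; exact h0 x hx)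
  exact H (Set.left_mem_Icc.2 hab) (Set.right_mem_Icc.2 hab) hab

lemma anti_aux {f f' : ℝ → ℝ} {a b : ℝ} (hab : a ≤ b)
    (hc : ContinuousOn f (Set.Icc a b))
    (hd : ∀ x ∈ Set.Ioo a b, HasDerivAt f (f' x) x)
    (h0 : ∀ x ∈ Set.Ioo a b, f' x ≤ 0) : f b ≤ f a := by
  have := mono_aux (f := fun x => -f x) (f' := fun x => -f' x) hab
    (hc.neg) (fun x hx => (hd x hx).neg) (fun x hx => neg_nonneg.2 (h0 x hx))
  simpa using this


set_option maxHeartbeats 2000000 in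
/-- Pointwise decay estimate for entire radial solutions, `N ≥ 3`, `α > -2`:
`e^{u(r)} ≤ -β (2+α)(N+α) r^{-(2+α)}` for all `r > 0`, where `β = v(0)`. -/
theorem pointwise_decay_entire_radial
    (N : ℕ) (hN : 3 ≤ N) (α : ℝ) (hα : -2 < α)
    (u v : ℝ → ℝ) (h : IsEntireRadialSolution N α u v) :
    ∀ r : ℝ, 0 < r →
      Real.exp (u r) ≤ -(v 0) * (2 + α) * ((N : ℝ) + α) * r ^ (-(2 + α)) := by
  obtain ⟨m, rfl⟩ : ∃ m, N = m + 3 := ⟨N - 3, by omega⟩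
  obtain ⟨hu, hv, hu0, hdu0, hdv0, odeu, odev⟩ := h
  have hm0 : (0:ℝ) ≤ (m:ℝ) := Nat.cast_nonneg m
  have hα2 : (0:ℝ) < 2 + α := by linarith
  set q : ℝ := (m:ℝ) + 3 + α with hqdef
  have hq : (0:ℝ) < q := by rw [hqdef]; linarith
  have hNcast : ((m + 3 : ℕ) : ℝ) - 1 = (m:ℝ) + 2 := by push_cast; ring
  -- Basic regularity facts
  have huc : ContinuousOn u (Set.Ici 0) := hu.continuousOn
  have hvc : ContinuousOn v (Set.Ici 0) := hv.continuousOn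
  have hducW : ContinuousOn (derivWithin u (Set.Ici 0)) (Set.Ici 0) :=
    hu.continuousOn_derivWithin (uniqueDiffOn_Ici 0) one_le_two
  have hdvcW : ContinuousOn (derivWithin v (Set.Ici 0)) (Set.Ici 0) :=
    hv.continuousOn_derivWithin (uniqueDiffOn_Ici 0) one_le_two
  have hdueq : ∀ r : ℝ, 0 < r → derivWithin u (Set.Ici 0) r = deriv u r :=
    fun r hr => derivWithin_of_mem_nhds (Ici_mem_nhds hr)
  have hdveq : ∀ r : ℝ, 0 < r → derivWithin v (Set.Ici 0) r = deriv v r :=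
    fun r hr => derivWithin_of_mem_nhds (Ici_mem_nhds hr)
  have hud : ∀ r : ℝ, 0 < r → HasDerivAt u (deriv u r) r := by
    intro r hr
    exact (((hu.differentiableOn two_ne_zero) r hr.le).differentiableAt
      (Ici_mem_nhds hr)).hasDerivAt
  have hvd : ∀ r : ℝ, 0 < r → HasDerivAt v (deriv v r) r := by
    intro r hr
    exact (((hv.differentiableOn two_ne_zero) r hr.le).differentiableAt
      (Ici_mem_nhds hr)).hasDerivAt
  have hud2 : ∀ r : ℝ, 0 < r → HasDerivAt (deriv u) (deriv (deriv u) r) r := by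
    intro r hr
    have h1 : ContDiffOn ℝ 1 (deriv u) (Set.Ioi 0) :=
      (hu.mono Set.Ioi_subset_Ici_self).deriv_of_isOpen isOpen_Ioi (by norm_num)
    exact (((h1.differentiableOn one_ne_zero) r hr).differentiableAt
      (Ioi_mem_nhds hr)).hasDerivAt
  have hvd2 : ∀ r : ℝ, 0 < r → HasDerivAt (deriv v) (deriv (deriv v) r) r := by
    intro r hr
    have h1 : ContDiffOn ℝ 1 (deriv v) (Set.Ioi 0) :=
      (hv.mono Set.Ioi_subset_Ici_self).deriv_of_isOpen isOpen_Ioi (by norm_num)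
    exact (((h1.differentiableOn one_ne_zero) r hr).differentiableAt
      (Ioi_mem_nhds hr)).hasDerivAt
  -- The key auxiliary functions
  set G : ℝ → ℝ := fun s => s ^ (m+2) * deriv v s with hGdef
  set P : ℝ → ℝ := fun s => s ^ (m+2) * deriv u s with hPdef
  have hGc : ContinuousOn G (Set.Ici 0) := by
    have h1 : ContinuousOn (fun s : ℝ => s ^ (m+2) * derivWithin v (Set.Ici 0) s) (Set.Ici 0) :=
      (continuous_pow _).continuousOn.mul hdvcW
    refine h1.congr fun s hs => ?_
    rcases eq_or_lt_of_le (Set.mem_Ici.mp hs) with h | h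
    · simp [hGdef, ← h]
    · simp [hGdef, hdveq s h]
  have hPc : ContinuousOn P (Set.Ici 0) := by
    have h1 : ContinuousOn (fun s : ℝ => s ^ (m+2) * derivWithin u (Set.Ici 0) s) (Set.Ici 0) :=
      (continuous_pow _).continuousOn.mul hducW
    refine h1.congr fun s hs => ?_
    rcases eq_or_lt_of_le (Set.mem_Ici.mp hs) with h | h
    · simp [hPdef, ← h]
    · simp [hPdef, hdueq s h]
  have hG0 : G 0 = 0 := by simp [hGdef]
  have hP0 : P 0 = 0 := by simp [hPdef]
  have hGder : ∀ r : ℝ, 0 < r → HasDerivAt G (r ^ (m+2) * (r ^ α * Real.exp (u r))) r := by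
    intro r hr
    have hode := odev r hr
    rw [hNcast] at hode
    have hddv : deriv (deriv v) r = r ^ α * Real.exp (u r) - ((m:ℝ)+2) * deriv v r / r := by
      linarith
    have h1 : HasDerivAt (fun s : ℝ => s ^ (m+2) * deriv v s) _ r := (hasDerivAt_pow (m+2) r).mul (hvd2 r hr)
    rw [hGdef]
    convert h1 using 1
    rw [hddv]
    have hrne : r ≠ 0 := ne_of_gt hr
    push_cast
    field_simp
    ring
  have hPder : ∀ r : ℝ, 0 < r → HasDerivAt P (r ^ (m+2) * v r) r := by
    intro r hr
    have hode := odeu r hr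
    rw [hNcast] at hode
    have hddu : deriv (deriv u) r = v r - ((m:ℝ)+2) * deriv u r / r := by linarith
    have h1 : HasDerivAt (fun s : ℝ => s ^ (m+2) * deriv u s) _ r := (hasDerivAt_pow (m+2) r).mul (hud2 r hr)
    rw [hPdef]
    convert h1 using 1
    rw [hddu]
    have hrne : r ≠ 0 := ne_of_gt hr
    push_cast
    field_simp
    ring
  have hGnn : ∀ r : ℝ, 0 ≤ r → 0 ≤ G r := by
    intro r hr0
    rcases eq_or_lt_of_le hr0 with h | h
    · rw [← h, hG0]
    · have := mono_aux (f := G) (f' := fun s => s ^ (m+2) * (s ^ α * Real.exp (u s))) h.le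
        (hGc.mono (Set.Icc_subset_Ici_self)) (fun x hx => hGder x hx.1)
        (fun x hx => by have hx0 : (0:ℝ) < x := hx.1; positivity)
      rw [hG0] at this
      exact this
  have hdvnn : ∀ r : ℝ, 0 < r → 0 ≤ deriv v r := by
    intro r hr
    have h1 : 0 ≤ r ^ (m+2) * deriv v r := hGnn r hr.le
    have h2 : (0:ℝ) < r ^ (m+2) := pow_pos hr _
    by_contra hc
    push_neg at hc
    nlinarith
  have hvmono : MonotoneOn v (Set.Ici 0) := by
    refine monotoneOn_of_deriv_nonneg (convex_Ici 0) hvc ?_ ?_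
    · intro x hx
      rw [interior_Ici] at hx
      exact (hvd x hx).differentiableAt.differentiableWithinAt
    · intro x hx
      rw [interior_Ici] at hx
      exact hdvnn x hx
  have hvle : ∀ r : ℝ, 0 ≤ r → v r ≤ 0 := by
    by_contra hcon
    push_neg at hcon
    obtain ⟨rr, hrr0, hvrr⟩ := hcon
    set s0 : ℝ := rr + 1 with hs0def
    have hs01 : (1:ℝ) ≤ s0 := by linarith
    have hs0pos : (0:ℝ) < s0 := by linarith
    have hc0 : 0 < v s0 :=
      lt_of_lt_of_le hvrr (hvmono (Set.mem_Ici.mpr hrr0)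
        (Set.mem_Ici.mpr hs0pos.le) (by linarith))
    set c : ℝ := v s0 with hcdef
    have hvge : ∀ t, s0 ≤ t → c ≤ v t := fun t ht =>
      hvmono (Set.mem_Ici.mpr hs0pos.le) (Set.mem_Ici.mpr (hs0pos.le.trans ht)) ht
    have hm3 : (0:ℝ) < (m:ℝ) + 3 := by linarith
    -- Step B : lower bound for P
    have hPlb : ∀ r, s0 ≤ r →
        P s0 - c * s0^(m+3)/((m:ℝ)+3) + c * r^(m+3)/((m:ℝ)+3) ≤ P r := by
      intro r hr
      have key := mono_aux (f := fun t => P t - c * t^(m+3)/((m:ℝ)+3))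
        (f' := fun t => t^(m+2) * v t - c * t^(m+2)) hr ?_ ?_ ?_
      · linarith
      · exact ((hPc.mono (fun x hx => le_trans hs0pos.le hx.1)).sub
          (((continuous_const.mul (continuous_pow (m+3))).div_const _).continuousOn))
      · intro x hx
        have hx0 : (0:ℝ) < x := lt_trans hs0pos hx.1
        have h2 := ((hasDerivAt_pow (m+3) x).const_mul c).div_const ((m:ℝ)+3)
        refine (hPder x hx0).sub ?_
        refine h2.congr_deriv ?_
        have : ((m:ℝ)+3) ≠ 0 := ne_of_gt hm3
        rw [show m + 3 - 1 = m + 2 by omega]; push_cast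
        field_simp
      · intro x hx
        have hx0 : (0:ℝ) < x := lt_trans hs0pos hx.1
        have h1 : c ≤ v x := hvge x hx.1.le
        have h2 : (0:ℝ) ≤ x^(m+2) := pow_nonneg hx0.le _
        nlinarith
    set M0 : ℝ := max (c * s0^(m+3)/((m:ℝ)+3) - P s0) 0 with hM0def
    have hM0nn : 0 ≤ M0 := le_max_right _ _
    -- Step C : lower bound for deriv u
    have hdulb : ∀ r, s0 ≤ r → c * r / ((m:ℝ)+3) - M0 ≤ deriv u r := by
      intro r hr
      have hr1 : (1:ℝ) ≤ r := hs01.trans hr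
      have hr0 : (0:ℝ) < r := by linarith
      have hp2 : (0:ℝ) < r^(m+2) := pow_pos hr0 _
      have hkey := hPlb r hr
      have hPr : c*r^(m+3)/((m:ℝ)+3) - M0 ≤ P r := by
        have h1 : c * s0^(m+3)/((m:ℝ)+3) - P s0 ≤ M0 := le_max_left _ _
        linarith
      have hdu : deriv u r = P r / r^(m+2) := by rw [hPdef]; field_simp
      rw [hdu]
      have h2 : (c*r^(m+3)/((m:ℝ)+3) - M0) / r^(m+2) ≤ P r / r^(m+2) :=
        (div_le_div_iff_of_pos_right hp2).mpr hPr
      have e1 : c*r^(m+3)/((m:ℝ)+3)/r^(m+2) = c*r/((m:ℝ)+3) := by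
        rw [pow_succ]
        field_simp
      have e2 : M0 / r^(m+2) ≤ M0 := div_le_self hM0nn (one_le_pow₀ hr1)
      have e3 : (c*r^(m+3)/((m:ℝ)+3) - M0) / r^(m+2)
          = c*r^(m+3)/((m:ℝ)+3)/r^(m+2) - M0/r^(m+2) := by ring
      rw [e3, e1] at h2
      linarith
    -- Step D : choice of R2
    set b : ℝ := 2*((m:ℝ)+2) with hbdef
    have hbnn : (0:ℝ) ≤ b := by rw [hbdef]; linarith
    set R2 : ℝ := max s0 (((m:ℝ)+3) * (b + 1 + M0) / c) with hR2def
    have hR2s0 : s0 ≤ R2 := le_max_left _ _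
    have hR21 : (1:ℝ) ≤ R2 := hs01.trans hR2s0
    have hR2pos : (0:ℝ) < R2 := by linarith
    have hdub : ∀ r, R2 ≤ r → b + 1 ≤ deriv u r := by
      intro r hr
      have h1 := hdulb r (hR2s0.trans hr)
      have h2 : ((m:ℝ)+3) * (b+1+M0) / c ≤ r := le_trans (le_max_right _ _) hr
      rw [div_le_iff₀ hc0] at h2
      have h3 : b + 1 + M0 ≤ c * r/((m:ℝ)+3) := by
        rw [le_div_iff₀ hm3]
        nlinarith
      linarith
    have hdun : ∀ r, R2 ≤ r → 0 ≤ deriv u r := by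
      intro r hr
      have := hdub r hr
      linarith
    have humonoR : MonotoneOn u (Set.Ici R2) := by
      refine monotoneOn_of_deriv_nonneg (convex_Ici _)
        (huc.mono (fun x hx => le_trans hR2pos.le hx)) ?_ ?_
      · intro x hx
        rw [interior_Ici] at hx
        exact (hud x (lt_trans hR2pos hx)).differentiableAt.differentiableWithinAt
      · intro x hx
        rw [interior_Ici] at hx
        exact hdun x hx.le
    -- Step E : linear growth of u
    have hulin : ∀ r, R2 ≤ r → u R2 + (b+1)*(r - R2) ≤ u r := by
      intro r hr
      have key := mono_aux (f := fun t => u t - (b+1)*t)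
        (f' := fun t => deriv u t - (b+1)) hr ?_ ?_ ?_
      · nlinarith
      · exact ((huc.mono (fun x hx => le_trans hR2pos.le hx.1)).sub
          ((continuous_const.mul continuous_id).continuousOn))
      · intro x hx
        have hx0 : (0:ℝ) < x := lt_trans hR2pos hx.1
        have h2 := (hud x hx0).sub ((hasDerivAt_id x).const_mul (b+1))
        refine h2.congr_deriv ?_
        ring
      · intro x hx
        have := hdub x hx.1.le
        linarith
    -- Step F : choice of rho0
    set ρ0 : ℝ := max R2 (3072 + (b+1)*R2 - u R2) with hρ0def
    have hρR2 : R2 ≤ ρ0 := le_max_left _ _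
    have hρ1 : (1:ℝ) ≤ ρ0 := hR21.trans hρR2
    have hρpos : (0:ℝ) < ρ0 := by linarith
    have hρs0 : s0 ≤ ρ0 := hR2s0.trans hρR2
    have hA : 3072 + b*ρ0 ≤ u ρ0 := by
      have h1 := hulin ρ0 hρR2
      have h2 : 3072 + (b+1)*R2 - u R2 ≤ ρ0 := le_max_right _ _
      nlinarith
    -- Step G : B and exp bound
    set B : ℝ := (ρ0+1)^(m+2) with hBdef
    have hB1 : (1:ℝ) ≤ B := by
      rw [hBdef]
      calc (1:ℝ) = 1^(m+2) := (one_pow _).symm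
        _ ≤ (ρ0+1)^(m+2) := pow_le_pow_left₀ one_pos.le (by linarith) _
    have hBpos : (0:ℝ) < B := lt_of_lt_of_le one_pos hB1
    have hexpA : 3072 * B^2 ≤ Real.exp (u ρ0) := by
      have h1 : ρ0 + 1 ≤ Real.exp ρ0 := by
        have := Real.add_one_le_exp ρ0
        linarith
      have h2 : B ≤ Real.exp ρ0 ^ (m+2) := by
        rw [hBdef]
        exact pow_le_pow_left₀ (by linarith) h1 _
      have h3 : B^2 ≤ (Real.exp ρ0 ^ (m+2))^2 :=
        pow_le_pow_left₀ hBpos.le h2 2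
      have h4 : (Real.exp ρ0 ^ (m+2))^2 = Real.exp ρ0 ^ (2*(m+2)) := by
        rw [← pow_mul, Nat.mul_comm]
      have h5 : Real.exp ρ0 ^ (2*(m+2)) = Real.exp (b * ρ0) := by
        rw [← Real.exp_nat_mul]
        congr 1
        rw [hbdef]
        push_cast
        ring
      have h6 : (3072:ℝ) ≤ Real.exp 3072 := by
        have := Real.add_one_le_exp (3072:ℝ)
        linarith
      calc 3072 * B^2 ≤ Real.exp 3072 * Real.exp (b * ρ0) := by
            have h7 : B^2 ≤ Real.exp (b*ρ0) := by rw [← h5, ← h4]; exact h3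
            have h8 : (0:ℝ) ≤ B^2 := by positivity
            exact mul_le_mul h6 h7 h8 (Real.exp_pos _).le
        _ = Real.exp (3072 + b*ρ0) := (Real.exp_add _ _).symm
        _ ≤ Real.exp (u ρ0) := Real.exp_le_exp.2 hA
    have hvposW : ∀ t, ρ0 ≤ t → 0 ≤ v t := fun t ht =>
      le_of_lt (lt_of_lt_of_le hc0 (hvge t (hρs0.trans ht)))
    -- Step H : the iteration inequalities
    have hG_step : ∀ ρ t, ρ0 ≤ ρ → ρ ≤ t → t ≤ ρ0+1 →
        G ρ + Real.exp (u ρ) * (t - ρ) ≤ G t := by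
      intro ρ t hρ hρt ht
      have hρpos' : (0:ℝ) < ρ := by linarith
      have key := mono_aux (f := fun s => G s - Real.exp (u ρ) * s)
        (f' := fun s => s^(m+2) * (s^α * Real.exp (u s)) - Real.exp (u ρ)) hρt ?_ ?_ ?_
      · nlinarith
      · exact ((hGc.mono (fun x hx => le_trans hρpos'.le hx.1)).sub
          ((continuous_const.mul continuous_id).continuousOn))
      · intro x hx
        have hx0 : (0:ℝ) < x := lt_trans hρpos' hx.1
        have h2 := (hGder x hx0).sub ((hasDerivAt_id x).const_mul (Real.exp (u ρ)))
        refine h2.congr_deriv ?_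
        ring
      · intro x hx
        have hx1 : (1:ℝ) ≤ x := by linarith [hx.1]
        have hx0 : (0:ℝ) < x := by linarith
        have hA1 : (1:ℝ) ≤ x^(m+2) * x^α := by
          rw [← Real.rpow_natCast x (m+2), ← Real.rpow_add hx0]
          apply Real.one_le_rpow hx1
          push_cast
          linarith
        have hxu : Real.exp (u ρ) ≤ Real.exp (u x) :=
          Real.exp_le_exp.2 (humonoR (Set.mem_Ici.mpr (hρR2.trans hρ))
            (Set.mem_Ici.mpr (hρR2.trans (by linarith [hx.1]))) hx.1.le)
        nlinarith [Real.exp_pos (u x), Real.exp_pos (u ρ)]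
    have hv_step : ∀ ρ d, ρ0 ≤ ρ → 0 ≤ d → ρ + d ≤ ρ0+1 →
        v ρ + Real.exp (u ρ) * d^2/(2*B) ≤ v (ρ+d) := by
      intro ρ d hρ hd hρd
      have hρpos' : (0:ℝ) < ρ := by linarith
      have key := mono_aux (f := fun s => v s - Real.exp (u ρ) * (s-ρ)^2/(2*B))
        (f' := fun s => deriv v s - Real.exp (u ρ) * (s-ρ)/B)
        (by linarith : ρ ≤ ρ+d) ?_ ?_ ?_
      · simp only [sub_self, add_sub_cancel_left] at key
        norm_num at key
        linarith
      · refine ((hvc.mono (fun x hx => le_trans hρpos'.le hx.1)).sub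
          (Continuous.continuousOn ?_))
        exact (continuous_const.mul ((continuous_id.sub continuous_const).pow 2)).div_const _
      · intro x hx
        have hx0 : (0:ℝ) < x := lt_trans hρpos' hx.1
        have h2 : HasDerivAt (fun s : ℝ => Real.exp (u ρ) * (s-ρ)^2/(2*B))
            (Real.exp (u ρ)*(x-ρ)/B) x := by
          have h3 := ((((hasDerivAt_id x).sub_const ρ).pow 2).const_mul
            (Real.exp (u ρ))).div_const (2*B)
          refine h3.congr_deriv ?_
          have hBne : B ≠ 0 := ne_of_gt hBpos
          simp only [id_eq]
          field_simp
          ring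
        exact (hvd x hx0).sub h2
      · intro x hx
        have hx0 : (0:ℝ) < x := lt_trans hρpos' hx.1
        have hGs := hG_step ρ x hρ hx.1.le (by linarith [hx.2])
        have hGρ := hGnn ρ (by linarith)
        have hGx : Real.exp (u ρ) * (x - ρ) ≤ G x := by linarith
        have hxB : x^(m+2) ≤ B := by
          rw [hBdef]
          exact pow_le_pow_left₀ hx0.le (by linarith [hx.2]) _
        have hp2 : (0:ℝ) < x^(m+2) := pow_pos hx0 _
        have hdvx : deriv v x = G x / x^(m+2) := by rw [hGdef]; field_simp
        have h5 : Real.exp (u ρ) * (x-ρ)/B ≤ Real.exp (u ρ) * (x-ρ)/x^(m+2) :=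
          div_le_div_of_nonneg_left
            (mul_nonneg (Real.exp_pos _).le (by linarith [hx.1])) hp2 hxB
        have h6 : Real.exp (u ρ) * (x-ρ)/x^(m+2) ≤ G x / x^(m+2) :=
          (div_le_div_iff_of_pos_right hp2).mpr hGx
        rw [hdvx]
        linarith
    have hu_step : ∀ ρ d, ρ0 ≤ ρ → 0 ≤ d → ρ + d ≤ ρ0+1 →
        u ρ + v ρ * d^2/(2*B) ≤ u (ρ+d) := by
      intro ρ d hρ hd hρd
      have hρpos' : (0:ℝ) < ρ := by linarith
      have hvρ0 : 0 ≤ v ρ := hvposW ρ hρ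
      have hPρ : 0 ≤ P ρ := by
        rw [hPdef]
        exact mul_nonneg (pow_nonneg hρpos'.le _) (hdun ρ (hρR2.trans hρ))
      have hPs : ∀ x, ρ ≤ x → x ≤ ρ0+1 → P ρ + v ρ * (x - ρ) ≤ P x := by
        intro x hx1 hx2
        have key := mono_aux (f := fun t => P t - v ρ * t)
          (f' := fun t => t^(m+2) * v t - v ρ) hx1 ?_ ?_ ?_
        · nlinarith
        · exact ((hPc.mono (fun y hy => le_trans hρpos'.le hy.1)).sub
            ((continuous_const.mul continuous_id).continuousOn))
        · intro y hy
          have hy0 : (0:ℝ) < y := lt_trans hρpos' hy.1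
          have h2 := (hPder y hy0).sub ((hasDerivAt_id y).const_mul (v ρ))
          refine h2.congr_deriv ?_
          ring
        · intro y hy
          have hy1 : (1:ℝ) ≤ y := by linarith [hy.1]
          have hvy : v ρ ≤ v y := hvmono (Set.mem_Ici.mpr hρpos'.le)
            (Set.mem_Ici.mpr (by linarith [hy.1])) hy.1.le
          have h1 : (1:ℝ) ≤ y^(m+2) := one_le_pow₀ hy1
          nlinarith
      have key := mono_aux (f := fun s => u s - v ρ * (s-ρ)^2/(2*B))
        (f' := fun s => deriv u s - v ρ * (s-ρ)/B)
        (by linarith : ρ ≤ ρ+d) ?_ ?_ ?_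
      · simp only [sub_self, add_sub_cancel_left] at key
        norm_num at key
        linarith
      · refine ((huc.mono (fun x hx => le_trans hρpos'.le hx.1)).sub
          (Continuous.continuousOn ?_))
        exact (continuous_const.mul ((continuous_id.sub continuous_const).pow 2)).div_const _
      · intro x hx
        have hx0 : (0:ℝ) < x := lt_trans hρpos' hx.1
        have h2 : HasDerivAt (fun s : ℝ => v ρ * (s-ρ)^2/(2*B))
            (v ρ*(x-ρ)/B) x := by
          have h3 := ((((hasDerivAt_id x).sub_const ρ).pow 2).const_mul (v ρ)).div_const (2*B)
          refine h3.congr_deriv ?_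
          have hBne : B ≠ 0 := ne_of_gt hBpos
          simp only [id_eq]
          field_simp
          ring
        exact (hud x hx0).sub h2
      · intro x hx
        have hx0 : (0:ℝ) < x := lt_trans hρpos' hx.1
        have hPx := hPs x hx.1.le (by linarith [hx.2])
        have hPx2 : v ρ * (x - ρ) ≤ P x := by linarith
        have hxB : x^(m+2) ≤ B := by
          rw [hBdef]
          exact pow_le_pow_left₀ hx0.le (by linarith [hx.2]) _
        have hp2 : (0:ℝ) < x^(m+2) := pow_pos hx0 _
        have hdux : deriv u x = P x / x^(m+2) := by rw [hPdef]; field_simp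
        have h5 : v ρ * (x-ρ)/B ≤ v ρ * (x-ρ)/x^(m+2) :=
          div_le_div_of_nonneg_left
            (mul_nonneg hvρ0 (by linarith [hx.1])) hp2 hxB
        have h6 : v ρ * (x-ρ)/x^(m+2) ≤ P x / x^(m+2) :=
          (div_le_div_iff_of_pos_right hp2).mpr hPx2
        rw [hdux]
        linarith
    -- core step
    have hstep : ∀ ρ d, ρ0 ≤ ρ → 0 ≤ d → ρ + d ≤ ρ0+1 →
        u ρ + Real.exp (u ρ) * d^4/(64*B^2) ≤ u (ρ+d) := by
      intro ρ d hρ hd hρd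
      have hhalf : (0:ℝ) ≤ d/2 := by linarith
      have h1 := hv_step ρ (d/2) hρ hhalf (by linarith)
      have h2 : 0 ≤ v (ρ + d/2) := hvposW _ (by linarith)
      have h3 := hu_step (ρ + d/2) (d/2) (by linarith) hhalf (by linarith)
      have h4 : u ρ ≤ u (ρ + d/2) :=
        humonoR (Set.mem_Ici.mpr (hρR2.trans hρ))
          (Set.mem_Ici.mpr (by linarith)) (by linarith)
      have h5 : ρ + d/2 + d/2 = ρ + d := by ring
      rw [h5] at h3
      have hvρ0 : 0 ≤ v ρ := hvposW ρ hρ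
      have hv' : Real.exp (u ρ) * d^2/(8*B) ≤ v (ρ + d/2) := by
        have e : Real.exp (u ρ) * (d/2)^2/(2*B) = Real.exp (u ρ)*d^2/(8*B) := by
          rw [div_eq_div_iff (by positivity : (2:ℝ)*B ≠ 0) (by positivity : (8:ℝ)*B ≠ 0)]
          ring
        rw [e] at h1
        linarith
      have h6 : Real.exp (u ρ) * d^2/(8*B) * ((d/2)^2/(2*B))
          ≤ v (ρ + d/2) * ((d/2)^2/(2*B)) :=
        mul_le_mul_of_nonneg_right hv' (by positivity)
      have h7 : Real.exp (u ρ) * d^2/(8*B) * ((d/2)^2/(2*B))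
          = Real.exp (u ρ) * d^4/(64*B^2) := by
        field_simp
        ring
      have h8 : v (ρ+d/2) * ((d/2)^2/(2*B)) = v (ρ+d/2) * (d/2)^2/(2*B) := by ring
      linarith
    -- Step I : iteration
    set ρs : ℕ → ℝ := fun k => ρ0 + 1 - (1/2:ℝ)^k with hρsdef
    have hρs0' : ρs 0 = ρ0 := by simp [hρsdef]
    have hρsge : ∀ k, ρ0 ≤ ρs k := by
      intro k
      have h1 : (1/2:ℝ)^k ≤ 1 := pow_le_one₀ (by norm_num) (by norm_num)
      simp only [hρsdef]
      linarith
    have hρsle : ∀ k, ρs k ≤ ρ0 + 1 := by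
      intro k
      have h1 : (0:ℝ) ≤ (1/2:ℝ)^k := by positivity
      simp only [hρsdef]
      linarith
    have hρssucc : ∀ k, ρs (k+1) = ρs k + (1/2:ℝ)^(k+1) := by
      intro k
      simp only [hρsdef, pow_succ]
      ring
    have hind : ∀ k : ℕ, u ρ0 + 3*(k:ℝ) ≤ u (ρs k) := by
      intro k
      induction k with
      | zero => simp [hρs0']
      | succ k ih =>
        have hd : (0:ℝ) ≤ (1/2:ℝ)^(k+1) := by positivity
        have hle : ρs k + (1/2:ℝ)^(k+1) ≤ ρ0 + 1 := by
          rw [← hρssucc k]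
          exact hρsle (k+1)
        have hstepk := hstep (ρs k) ((1/2:ℝ)^(k+1)) (hρsge k) hd hle
        rw [← hρssucc k] at hstepk
        have hgoal : (3:ℝ) ≤ Real.exp (u (ρs k)) * ((1/2:ℝ)^(k+1))^4/(64*B^2) := by
          have e2 : Real.exp (u ρ0) * (Real.exp 3)^k = Real.exp (u ρ0 + 3*(k:ℝ)) := by
            rw [Real.exp_add]
            congr 1
            rw [mul_comm (3:ℝ) (k:ℝ), Real.exp_nat_mul]
          have E : 3072 * B^2 * (Real.exp 3)^k ≤ Real.exp (u (ρs k)) := by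
            calc 3072 * B^2 * (Real.exp 3)^k
                ≤ Real.exp (u ρ0) * (Real.exp 3)^k :=
                  mul_le_mul_of_nonneg_right hexpA (pow_nonneg (Real.exp_pos _).le k)
              _ = Real.exp (u ρ0 + 3*(k:ℝ)) := e2
              _ ≤ Real.exp (u (ρs k)) := Real.exp_le_exp.2 ih
          have e4 : ((1/2:ℝ)^(k+1))^4 = ((1/16:ℝ))^(k+1) := by
            rw [← pow_mul, show (1/16:ℝ) = (1/2)^4 by norm_num, ← pow_mul, Nat.mul_comm]
          have e16 : (16:ℝ) ≤ Real.exp 3 := by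
            have h1 : (2.7:ℝ) ≤ Real.exp 1 := by linarith [Real.exp_one_gt_d9]
            have h2 : (2.7:ℝ)^3 ≤ Real.exp 1 ^ 3 := pow_le_pow_left₀ (by norm_num) h1 3
            have he : Real.exp 3 = Real.exp 1 ^ 3 := by
              rw [← Real.exp_nat_mul]
              norm_num
            rw [he]
            norm_num at h2 ⊢
            linarith
          have e5 : (Real.exp 3)^k * (1/16:ℝ)^k = (Real.exp 3/16)^k := by
            rw [← mul_pow]
            congr 1
            ring
          have e6 : (1:ℝ) ≤ (Real.exp 3 / 16)^k :=
            one_le_pow₀ (by rw [le_div_iff₀ (by norm_num : (0:ℝ) < 16)]; linarith)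
          rw [le_div_iff₀ (by positivity : (0:ℝ) < 64*B^2), e4]
          calc (3:ℝ) * (64*B^2) = (192*B^2) * 1 := by ring
            _ ≤ (192*B^2) * (Real.exp 3/16)^k :=
                mul_le_mul_of_nonneg_left e6 (by positivity)
            _ = (3072 * B^2 * (Real.exp 3)^k) * (1/16:ℝ)^(k+1) := by
                rw [pow_succ, ← e5]
                ring
            _ ≤ Real.exp (u (ρs k)) * (1/16:ℝ)^(k+1) :=
                mul_le_mul_of_nonneg_right E (by positivity)
        have hcast : ((k:ℝ)+1) = ((k+1 : ℕ) : ℝ) := by push_cast; ring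
        push_cast
        linarith [hstepk, ih, hgoal]
    -- Step J : contradiction via compactness
    have hne : (Set.Icc ρ0 (ρ0+1)).Nonempty := ⟨ρ0, by constructor <;> linarith⟩
    obtain ⟨z, hz, hzmax⟩ := isCompact_Icc.exists_isMaxOn hne
      (huc.mono (fun x hx => le_trans hρpos.le hx.1))
    obtain ⟨k, hk⟩ := exists_nat_gt ((u z - u ρ0)/3)
    have h1 : u (ρs k) ≤ u z := hzmax ⟨hρsge k, hρsle k⟩
    have h2 := hind k
    have h3 : (u z - u ρ0)/3 < (k:ℝ) := hk
    nlinarith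
  have hPnp : ∀ r : ℝ, 0 ≤ r → P r ≤ 0 := by
    intro r hr0
    rcases eq_or_lt_of_le hr0 with h | h
    · rw [← h, hP0]
    · have := anti_aux (f := P) (f' := fun s => s ^ (m+2) * v s) h.le
        (hPc.mono (Set.Icc_subset_Ici_self)) (fun x hx => hPder x hx.1)
        (fun x hx => mul_nonpos_of_nonneg_of_nonpos (pow_nonneg hx.1.le _) (hvle x hx.1.le))
      rw [hP0] at this
      exact this
  have hdunp : ∀ r : ℝ, 0 < r → deriv u r ≤ 0 := by
    intro r hr
    have h1 : r ^ (m+2) * deriv u r ≤ 0 := hPnp r hr.le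
    have h2 : (0:ℝ) < r ^ (m+2) := pow_pos hr _
    by_contra hc
    push_neg at hc
    nlinarith
  have hrpowc : ∀ p : ℝ, 0 < p → ContinuousOn (fun s : ℝ => s ^ p) (Set.Ici 0) :=
    fun p hp x _ => (Real.continuousAt_rpow_const x p (Or.inr hp.le)).continuousWithinAt
  have hH : ∀ r : ℝ, 0 < r → Real.exp (u r) * r ^ q / q ≤ G r := by
    intro r hr
    have key := mono_aux (f := fun s => G s - Real.exp (u s) * s ^ q / q)
      (f' := fun s => (-(deriv u s)) * (Real.exp (u s) * s ^ q) / q) hr.le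
      ?_ ?_ ?_
    · simp only [hG0, hu0, Real.exp_zero, Real.zero_rpow hq.ne', one_mul, mul_zero,
        zero_div, sub_zero, zero_sub, neg_le_sub_iff_le_add, zero_mul] at key
      linarith [key]
    · exact (hGc.sub (((Real.continuous_exp.comp_continuousOn huc).mul
        (hrpowc q hq)).div_const q)).mono Set.Icc_subset_Ici_self
    · intro x hx
      have hx0 : 0 < x := hx.1
      have hpow : (x:ℝ) ^ (m+2) * x ^ α = x ^ (q - 1) := by
        rw [← Real.rpow_natCast x (m+2), ← Real.rpow_add hx0]
        congr 1
        rw [hqdef]; push_cast; ring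
      have h2 : HasDerivAt (fun s => Real.exp (u s) * s ^ q)
          (Real.exp (u x) * deriv u x * x ^ q + Real.exp (u x) * (q * x ^ (q - 1))) x :=
        ((hud x hx0).exp).mul (Real.hasDerivAt_rpow_const (Or.inl hx0.ne'))
      have h3 := (hGder x hx0).sub (h2.div_const q)
      refine h3.congr_deriv ?_
      rw [← hpow]
      field_simp
      ring
    · intro x hx
      have hx0 : 0 < x := hx.1
      have := hdunp x hx0
      have h4 : (0:ℝ) ≤ Real.exp (u x) * x ^ q :=
        mul_nonneg (Real.exp_pos _).le (Real.rpow_nonneg hx0.le _)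
      exact div_nonneg (mul_nonneg (neg_nonneg.2 this) h4) hq.le
  have hK : ∀ r : ℝ, 0 < r →
      v 0 + Real.exp (u r) * r ^ ((2:ℝ)+α) / (q * (2+α)) ≤ v r := by
    intro r hr
    have key := mono_aux (f := fun s => v s - Real.exp (u s) * s ^ ((2:ℝ)+α) / (q * (2+α)))
      (f' := fun s => (deriv v s - Real.exp (u s) * s ^ ((1:ℝ)+α) / q)
        + (-(deriv u s)) * (Real.exp (u s) * s ^ ((2:ℝ)+α)) / (q * (2+α))) hr.le
      ?_ ?_ ?_
    · simp only [Real.zero_rpow hα2.ne', mul_zero, zero_div, sub_zero] at key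
      linarith [key]
    · exact (hvc.sub (((Real.continuous_exp.comp_continuousOn huc).mul
        (hrpowc _ hα2)).div_const _)).mono Set.Icc_subset_Ici_self
    · intro x hx
      have hx0 : 0 < x := hx.1
      have h2 : HasDerivAt (fun s => Real.exp (u s) * s ^ ((2:ℝ)+α))
          (Real.exp (u x) * deriv u x * x ^ ((2:ℝ)+α)
            + Real.exp (u x) * ((2+α) * x ^ ((1:ℝ)+α))) x := by
        have := ((hud x hx0).exp).mul
          (Real.hasDerivAt_rpow_const (p := (2:ℝ)+α) (Or.inl hx0.ne'))
        rw [show (2:ℝ)+α-1 = 1+α by ring] at this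
        exact this
      have h3 := (hvd x hx0).sub (h2.div_const (q * (2+α)))
      refine h3.congr_deriv ?_
      field_simp
      ring
    · intro x hx
      have hx0 : 0 < x := hx.1
      have hdu := hdunp x hx0
      have h4 : (0:ℝ) ≤ Real.exp (u x) * x ^ ((2:ℝ)+α) :=
        mul_nonneg (Real.exp_pos _).le (Real.rpow_nonneg hx0.le _)
      have h5 : Real.exp (u x) * x ^ ((1:ℝ)+α) / q ≤ deriv v x := by
        have hHx := hH x hx0
        have hxpow : (0:ℝ) < x ^ (m+2) := pow_pos hx0 _
        have hsplit : x ^ q = x ^ ((1:ℝ)+α) * x ^ (m+2) := by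
          rw [← Real.rpow_natCast x (m+2), ← Real.rpow_add hx0]
          congr 1
          rw [hqdef]; push_cast; ring
        have hdvx : deriv v x = G x / x ^ (m+2) := by
          rw [hGdef]
          field_simp
        rw [hdvx, le_div_iff₀ hxpow]
        calc Real.exp (u x) * x ^ ((1:ℝ)+α) / q * x ^ (m+2)
            = Real.exp (u x) * x ^ q / q := by rw [hsplit]; ring
          _ ≤ G x := hHx
      have h6 : (0:ℝ) ≤ (-(deriv u x)) * (Real.exp (u x) * x ^ ((2:ℝ)+α)) / (q * (2+α)) :=
        div_nonneg (mul_nonneg (neg_nonneg.2 hdu) h4) (mul_pos hq hα2).le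
      have h7 : 0 ≤ deriv v x - Real.exp (u x) * x ^ ((1:ℝ)+α) / q := by linarith
      linarith
  intro r hr
  have h1 := hK r hr
  have h2 := hvle r hr.le
  have hrp : (0:ℝ) < r ^ ((2:ℝ)+α) := Real.rpow_pos_of_pos hr _
  have hq2 : (0:ℝ) < q * (2+α) := mul_pos hq hα2
  have h3 : Real.exp (u r) * r ^ ((2:ℝ)+α) ≤ -(v 0) * (q * (2+α)) := by
    have h4 : Real.exp (u r) * r ^ ((2:ℝ)+α) / (q*(2+α)) ≤ -(v 0) := by linarith
    rw [div_le_iff₀ hq2] at h4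
    linarith
  rw [Real.rpow_neg hr.le,
    show ((m+3:ℕ):ℝ) + α = q by rw [hqdef]; push_cast; ring,
    ← div_eq_mul_inv, le_div_iff₀ hrp]
  nlinarith [h3]
end
end

section
/- Let α > −2, let N ≥ 3 be an integer, let 0 < R ≤ ∞, and let (u, v) be a radial solution of Δ²u = |x|^α e^u on [0, R) normalized by u(0) = 0. Then u(r) ≥ (v(0)/(2N)) r² for every r ∈ [0, R). -/
open Set Filter Topology

noncomputable section

lemma nonneg_of_deriv_aux {b : ℝ} (f : ℝ → ℝ)
    (hf : ContinuousOn f (Icc 0 b)) (h0 : f 0 = 0)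
    (hd : ∀ x ∈ Ioo (0:ℝ) b, ∃ d, HasDerivAt f d x ∧ 0 ≤ d) :
    ∀ x ∈ Icc (0:ℝ) b, 0 ≤ f x := by
  intro x hx
  have hmono : MonotoneOn f (Icc 0 b) := by
    apply monotoneOn_of_deriv_nonneg (convex_Icc 0 b) hf
    · intro y hy
      rw [interior_Icc] at hy
      obtain ⟨d, hdy, _⟩ := hd y hy
      exact hdy.differentiableAt.differentiableWithinAt
    · intro y hy
      rw [interior_Icc] at hy
      obtain ⟨d, hdy, hd0⟩ := hd y hy
      rw [hdy.deriv]; exact hd0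
  have h := hmono (left_mem_Icc.2 (hx.1.trans hx.2)) hx hx.1
  rw [h0] at h; exact h

/-- Lower bound for radial solutions of `Δ²u = |x|^α e^u` on `[0, R)` (with
`R ∈ (0, ∞]` an extended real) normalized by `u(0) = 0`:
`u(r) ≥ (v(0)/(2N)) r²` on `[0, R)`.  Here `v` plays the role of `Δu`, the pair
`(u, v)` is `C²` on `[0, R)` with `u(0) = 0`, `u′(0) = v′(0) = 0` (one-sided
derivatives), and satisfies `u″ + (N-1)u′/r = v`, `v″ + (N-1)v′/r = r^α e^u` on
`(0, R)`. -/
theorem lower_bound_radial_solution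
    (N : ℕ) (hN : 3 ≤ N) (α : ℝ) (hα : -2 < α)
    (R : EReal) (hR : 0 < R) (u v : ℝ → ℝ)
    (hu : ContDiffOn ℝ 2 u {r : ℝ | 0 ≤ r ∧ (r : EReal) < R})
    (hv : ContDiffOn ℝ 2 v {r : ℝ | 0 ≤ r ∧ (r : EReal) < R})
    (hu0 : u 0 = 0)
    (hu' : derivWithin u {r : ℝ | 0 ≤ r ∧ (r : EReal) < R} 0 = 0)
    (hv' : derivWithin v {r : ℝ | 0 ≤ r ∧ (r : EReal) < R} 0 = 0)
    (heq1 : ∀ r : ℝ, 0 < r → (r : EReal) < R →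
      deriv (deriv u) r + ((N : ℝ) - 1) * deriv u r / r = v r)
    (heq2 : ∀ r : ℝ, 0 < r → (r : EReal) < R →
      deriv (deriv v) r + ((N : ℝ) - 1) * deriv v r / r = r ^ α * Real.exp (u r)) :
    ∀ r : ℝ, 0 ≤ r → (r : EReal) < R → v 0 / (2 * N) * r ^ 2 ≤ u r := by
  intro r0 hr0 hrR
  set S : Set ℝ := {r : ℝ | 0 ≤ r ∧ (r : EReal) < R} with hSdef
  rcases eq_or_lt_of_le hr0 with h0 | hpos
  · rw [← h0, hu0]; norm_num
  -- basic numeric facts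
  have hNne : (N : ℝ) ≠ 0 := Nat.cast_ne_zero.mpr (by omega)
  have hcast : ((N - 1 : ℕ) : ℝ) = (N : ℝ) - 1 := by
    rw [Nat.cast_sub (by omega)]; norm_num
  -- the open set U
  set U : Set ℝ := Ioi 0 ∩ ((↑) : ℝ → EReal) ⁻¹' Iio R with hUdef
  have hUopen : IsOpen U := (isOpen_Ioi).inter (isOpen_Iio.preimage continuous_coe_real_ereal)
  have hUS : U ⊆ S := fun x hx => ⟨le_of_lt hx.1, hx.2⟩
  have hSnhds : ∀ x ∈ U, S ∈ 𝓝 x := fun x hx =>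
    mem_nhds_iff.2 ⟨U, hUS, hUopen, hx⟩
  have hIccS : Icc 0 r0 ⊆ S := fun x hx =>
    ⟨hx.1, lt_of_le_of_lt (EReal.coe_le_coe_iff.2 hx.2) hrR⟩
  have hIooU : Ioo 0 r0 ⊆ U := fun x hx =>
    ⟨hx.1, lt_trans (EReal.coe_lt_coe_iff.2 hx.2) hrR⟩
  -- unique differentiability of S
  have hSU : UniqueDiffOn ℝ S := by
    by_cases hT : R = ⊤
    · have : S = Ici (0:ℝ) := by
        ext x; simp [hSdef, hT, EReal.coe_lt_top]
      rw [this]; exact uniqueDiffOn_Ici 0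
    · have hB : R ≠ ⊥ := ne_bot_of_gt hR
      have : S = Ico (0:ℝ) R.toReal := by
        ext x
        simp only [hSdef, mem_setOf_eq, mem_Ico]
        constructor
        · rintro ⟨h1, h2⟩
          refine ⟨h1, ?_⟩
          rw [← EReal.coe_lt_coe_iff, EReal.coe_toReal hT hB]; exact h2
        · rintro ⟨h1, h2⟩
          refine ⟨h1, ?_⟩
          rw [← EReal.coe_toReal hT hB]; exact EReal.coe_lt_coe_iff.2 h2
      rw [this]; exact uniqueDiffOn_Ico 0 R.toReal
  -- differentiability infrastructure on U
  have hu2 : ContDiffOn ℝ 2 u U := hu.mono hUS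
  have hv2 : ContDiffOn ℝ 2 v U := hv.mono hUS
  have hu1 : ContDiffOn ℝ 1 (deriv u) U := hu2.deriv_of_isOpen hUopen (by norm_num)
  have hv1 : ContDiffOn ℝ 1 (deriv v) U := hv2.deriv_of_isOpen hUopen (by norm_num)
  have hasu : ∀ x ∈ U, HasDerivAt u (deriv u x) x := fun x hx =>
    ((hu2.differentiableOn two_ne_zero).differentiableAt (hUopen.mem_nhds hx)).hasDerivAt
  have hasv : ∀ x ∈ U, HasDerivAt v (deriv v x) x := fun x hx =>
    ((hv2.differentiableOn two_ne_zero).differentiableAt (hUopen.mem_nhds hx)).hasDerivAt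
  have hasu' : ∀ x ∈ U, HasDerivAt (deriv u) (deriv (deriv u) x) x := fun x hx =>
    ((hu1.differentiableOn one_ne_zero).differentiableAt (hUopen.mem_nhds hx)).hasDerivAt
  have hasv' : ∀ x ∈ U, HasDerivAt (deriv v) (deriv (deriv v) x) x := fun x hx =>
    ((hv1.differentiableOn one_ne_zero).differentiableAt (hUopen.mem_nhds hx)).hasDerivAt
  have hDuEq : ∀ x ∈ U, derivWithin u S x = deriv u x := fun x hx =>
    derivWithin_of_mem_nhds (hSnhds x hx)
  have hDvEq : ∀ x ∈ U, derivWithin v S x = deriv v x := fun x hx =>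
    derivWithin_of_mem_nhds (hSnhds x hx)
  have hDucont : ContinuousOn (derivWithin u S) S := hu.continuousOn_derivWithin hSU one_le_two
  have hDvcont : ContinuousOn (derivWithin v S) S := hv.continuousOn_derivWithin hSU one_le_two
  -- power rewrite facts (for a positive point x)
  have hx_in_U : ∀ x ∈ Ioo (0:ℝ) r0, x ∈ U := fun x hx => hIooU hx
  -- Step 1: G := r^(N-1) * v' is nonneg on [0, r0]
  have hGnonneg : ∀ x ∈ Icc (0:ℝ) r0, 0 ≤ x ^ (N-1) * derivWithin v S x := by
    apply nonneg_of_deriv_aux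
    · exact (continuous_pow (N-1)).continuousOn.mul (hDvcont.mono hIccS)
    · simp [zero_pow (show N - 1 ≠ 0 by omega)]
    · intro x hx
      have hxU := hIooU hx
      have hxR : (x : EReal) < R := hxU.2
      have hxne : x ≠ 0 := ne_of_gt hx.1
      have h1 : HasDerivAt (fun y => y ^ (N-1) * deriv v y)
          (((N-1 : ℕ) : ℝ) * x ^ (N-1-1) * deriv v x + x ^ (N-1) * deriv (deriv v) x) x :=
        (hasDerivAt_pow (N-1) x).mul (hasv' x hxU)
      have hev : (fun y => y ^ (N-1) * derivWithin v S y)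
          =ᶠ[𝓝 x] (fun y => y ^ (N-1) * deriv v y) := by
        filter_upwards [hUopen.mem_nhds hxU] with y hy
        rw [hDvEq y hy]
      refine ⟨_, h1.congr_of_eventuallyEq hev, ?_⟩
      have heq := heq2 x hx.1 hxR
      have h2nd : deriv (deriv v) x = x ^ α * Real.exp (u x) - ((N:ℝ)-1) * deriv v x / x := by
        linarith
      have hpow : x ^ (N-1) = x ^ (N-1-1) * x := by
        rw [← pow_succ]; congr 1; omega
      have hd : ((N-1 : ℕ) : ℝ) * x ^ (N-1-1) * deriv v x + x ^ (N-1) * deriv (deriv v) x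
          = x ^ (N-1) * (x ^ α * Real.exp (u x)) := by
        rw [h2nd, hcast, hpow]; field_simp; ring
      rw [hd]
      exact mul_nonneg (pow_nonneg hx.1.le _)
        (mul_nonneg (Real.rpow_nonneg hx.1.le α) (Real.exp_pos _).le)
  -- Step 2: v x ≥ v 0 on [0, r0]
  have hvge : ∀ x ∈ Icc (0:ℝ) r0, v 0 ≤ v x := by
    have := nonneg_of_deriv_aux (fun x => v x - v 0)
      (((hv.continuousOn).mono hIccS).sub continuousOn_const) (by simp)
      (by
        intro x hx
        have hxU := hIooU hx
        refine ⟨deriv v x, (hasv x hxU).sub_const _, ?_⟩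
        have h1 : 0 ≤ x ^ (N-1) * derivWithin v S x := hGnonneg x (Ioo_subset_Icc_self hx)
        have h2 : (0:ℝ) < x ^ (N-1) := pow_pos hx.1 _
        rw [← hDvEq x hxU]
        nlinarith)
    intro x hx
    have := this x hx
    linarith
  -- Step 3: H := r^(N-1) * u' - (v 0 / N) r^N nonneg on [0, r0]
  have hHnonneg : ∀ x ∈ Icc (0:ℝ) r0,
      0 ≤ x ^ (N-1) * derivWithin u S x - v 0 / N * x ^ N := by
    apply nonneg_of_deriv_aux
    · exact ((continuous_pow (N-1)).continuousOn.mul (hDucont.mono hIccS)).sub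
        (continuousOn_const.mul (continuous_pow N).continuousOn)
    · simp [zero_pow (show N - 1 ≠ 0 by omega), zero_pow (show N ≠ 0 by omega)]
    · intro x hx
      have hxU := hIooU hx
      have hxR : (x : EReal) < R := hxU.2
      have hxne : x ≠ 0 := ne_of_gt hx.1
      have h1 : HasDerivAt (fun y => y ^ (N-1) * deriv u y - v 0 / N * y ^ N)
          ((((N-1 : ℕ) : ℝ) * x ^ (N-1-1) * deriv u x + x ^ (N-1) * deriv (deriv u) x)
            - v 0 / N * (((N : ℕ) : ℝ) * x ^ (N-1))) x :=
        ((hasDerivAt_pow (N-1) x).mul (hasu' x hxU)).sub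
          ((hasDerivAt_pow N x).const_mul (v 0 / N))
      have hev : (fun y => y ^ (N-1) * derivWithin u S y - v 0 / N * y ^ N)
          =ᶠ[𝓝 x] (fun y => y ^ (N-1) * deriv u y - v 0 / N * y ^ N) := by
        filter_upwards [hUopen.mem_nhds hxU] with y hy
        rw [hDuEq y hy]
      refine ⟨_, h1.congr_of_eventuallyEq hev, ?_⟩
      have heq := heq1 x hx.1 hxR
      have h2nd : deriv (deriv u) x = v x - ((N:ℝ)-1) * deriv u x / x := by linarith
      have hpow : x ^ (N-1) = x ^ (N-1-1) * x := by
        rw [← pow_succ]; congr 1; omega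
      have hd : (((N-1 : ℕ) : ℝ) * x ^ (N-1-1) * deriv u x + x ^ (N-1) * deriv (deriv u) x)
            - v 0 / N * (((N : ℕ) : ℝ) * x ^ (N-1))
          = x ^ (N-1) * (v x - v 0) := by
        rw [h2nd, hcast, hpow]; field_simp; ring
      rw [hd]
      have := hvge x (Ioo_subset_Icc_self hx)
      have h2 : (0:ℝ) ≤ x ^ (N-1) := pow_nonneg hx.1.le _
      nlinarith
  -- Step 4: conclude with K := u - v 0 / (2N) r^2
  have hKnonneg : ∀ x ∈ Icc (0:ℝ) r0, 0 ≤ u x - v 0 / (2 * N) * x ^ 2 := by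
    apply nonneg_of_deriv_aux
    · exact ((hu.continuousOn).mono hIccS).sub
        (continuousOn_const.mul (continuous_pow 2).continuousOn)
    · simp [hu0]
    · intro x hx
      have hxU := hIooU hx
      have hxne : x ≠ 0 := ne_of_gt hx.1
      refine ⟨deriv u x - v 0 / (2 * N) * (((2:ℕ) : ℝ) * x ^ (2-1)),
        (hasu x hxU).sub ((hasDerivAt_pow 2 x).const_mul (v 0 / (2 * N))), ?_⟩
      have h1 : 0 ≤ x ^ (N-1) * derivWithin u S x - v 0 / N * x ^ N :=
        hHnonneg x (Ioo_subset_Icc_self hx)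
      have h2 : (0:ℝ) < x ^ (N-1) := pow_pos hx.1 _
      have hpowN : x ^ N = x ^ (N-1) * x := by
        rw [← pow_succ]; congr 1; omega
      rw [← hDuEq x hxU]
      have hderivge : v 0 / N * x ≤ derivWithin u S x := by
        rw [hpowN] at h1
        have h3 : x ^ (N-1) * (v 0 / N * x) ≤ x ^ (N-1) * derivWithin u S x := by nlinarith
        exact le_of_mul_le_mul_left h3 h2
      have : v 0 / (2 * N) * (((2:ℕ) : ℝ) * x ^ (2-1)) = v 0 / N * x := by
        push_cast; field_simp
      rw [this]; linarith
  have := hKnonneg r0 (right_mem_Icc.2 hpos.le)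
  linarith
end
end
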